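/- arXiv:1309.6477 — 5 statements merged into one kernel-verified Lean document; each statement's English description precedes it below -/
import Mathlib

section
/- For every integer x ≥ 2 and every ε with 0 < ε < min(1/x, 1 − 1/x), the competitive ratio of DNF restricted to input sequences with all item sizes in [1/x − ε, 1/x + ε] is at most x/(x+1). -/
open Filter MeasureTheory

/-- A valid bin covering input: all item sizes lie strictly between 0 and 1. -/
def validInput (I : List ℝ) : Prop := ∀ x ∈ I, 0 < x ∧ x < 1

/-- The total volume (sum of item sizes) of an input sequence. -/
def vol (I : List ℝ) : ℝ := I.sum

/-- One step of Dual Next-Fit: the state is the level of the open bin (0 if none)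
together with the number of covered (closed) bins so far. -/
noncomputable def dnfStep (s : ℝ × ℕ) (x : ℝ) : ℝ × ℕ :=
  if 1 ≤ s.1 + x then (0, s.2 + 1) else (s.1 + x, s.2)

/-- The number of bins covered by Dual Next-Fit on input `I`. -/
noncomputable def dnfCount (I : List ℝ) : ℕ := (I.foldl dnfStep (0, 0)).2

/-- The number of bins covered by the Dual Harmonic algorithm `DH_k` on input `I`:
items in `[1/j, 1/(j-1))` (for `2 ≤ j ≤ k`) are packed `j` to a bin, and items
in `(0, 1/k)` are packed in Next-Fit fashion in separate bins. -/
noncomputable def dhCount (k : ℕ) (I : List ℝ) : ℕ :=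
  (∑ j ∈ Finset.Icc 2 k,
      (I.countP fun x => decide ((1:ℝ)/(j:ℝ) ≤ x ∧ x < 1/((j:ℝ)-1))) / j)
  + dnfCount (I.filter fun x => decide (x < 1/(k:ℝ)))

/-- The optimal (offline) number of covered bins: the maximum, over all assignments
of the items of `I` to bins, of the number of bins receiving total size at least 1. -/
noncomputable def optCount (I : List ℝ) : ℕ :=
  Finset.sup Finset.univ (fun f : Fin I.length → Fin I.length =>
    (Finset.univ.filter fun b : Fin I.length =>
      1 ≤ ∑ i ∈ Finset.univ.filter (fun i => f i = b), I.get i).card)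

/-- The competitive ratio of the algorithm `A` restricted to input sequences with
all item sizes in `S`: the supremum of all `c` such that for some constant `b`,
`A I ≥ c·Opt I + b` for all such inputs. -/
noncomputable def CRrestricted (S : Set ℝ) (A : List ℝ → ℕ) : ℝ :=
  sSup {c : ℝ | ∃ b : ℝ, ∀ I : List ℝ, (∀ x ∈ I, x ∈ S) →
    c * (optCount I : ℝ) + b ≤ (A I : ℝ)}

/-- `A`'s performance on a worst permutation of `I`. -/
noncomputable def worstOf (A : List ℝ → ℕ) (I : List ℝ) : ℕ :=
  (I.permutations.map A).foldr min (A I)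

/-- The expected performance of `A` on a uniformly random permutation of `I`. -/
noncomputable def expPerm (A : List ℝ → ℕ) (I : List ℝ) : ℝ :=
  (∑ σ : Equiv.Perm (Fin I.length), (A (List.ofFn fun i => I.get (σ i)) : ℝ)) /
    ((I.length).factorial : ℝ)

/-- `liminf_{v→∞} inf { A(I)/v : vol I = v, items of I in S }`. -/
noncomputable def minRate (S : Set ℝ) (A : List ℝ → ℕ) : ℝ :=
  Filter.liminf (fun v : ℝ =>
    sInf {r : ℝ | ∃ I : List ℝ, (∀ x ∈ I, x ∈ S) ∧ vol I = v ∧ r = (A I : ℝ) / v})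
    Filter.atTop

/-- Expected performance of `A` on `n` items drawn independently and uniformly from `(0,1)`. -/
noncomputable def unifE (A : List ℝ → ℕ) (n : ℕ) : ℝ :=
  ∫ x : Fin n → ℝ, (A (List.ofFn x) : ℝ)
    ∂(Measure.pi fun _ : Fin n => volume.restrict (Set.Ioo (0:ℝ) 1))

/-- Expected performance of `A` on `n` independent items, each of size `ε` with
probability 1/2 and size `1-ε` with probability 1/2. -/
noncomputable def bernE (A : List ℝ → ℕ) (n : ℕ) (ε : ℝ) : ℝ :=
  (∑ f : Fin n → Bool, (A (List.ofFn fun i => if f i then ε else 1 - ε) : ℝ)) / 2^n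

/-- One step of a reasonable online algorithm with decision function `f`:
the accumulator records (history of items seen, levels of the open bins, number of
covered bins).  On item `x`, the algorithm places `x` in the open bin of index
`f hist x` (a new bin is opened if the index is out of range); a bin is closed
exactly when its content reaches 1. -/
noncomputable def algStep (f : List ℝ → ℝ → ℕ) (acc : List ℝ × List ℝ × ℕ) (x : ℝ) :
    List ℝ × List ℝ × ℕ :=
  let hist := acc.1
  let s := acc.2.1
  let c := acc.2.2
  let i := f hist x
  if h : i < s.length then
    if 1 ≤ s.get ⟨i, h⟩ + x then (hist ++ [x], s.eraseIdx i, c + 1)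
    else (hist ++ [x], s.set i (s.get ⟨i, h⟩ + x), c)
  else
    if 1 ≤ x then (hist ++ [x], s, c + 1)
    else (hist ++ [x], s ++ [x], c)

/-- Running the reasonable online algorithm with decision function `f` on input `I`. -/
noncomputable def runAlg (f : List ℝ → ℝ → ℕ) (I : List ℝ) : List ℝ × List ℝ × ℕ :=
  I.foldl (algStep f) ([], [], 0)
lemma foldl_dnf_replicate (a : ℝ) (ha : 0 < a) :
    ∀ (w : ℕ) (t : ℝ) (k : ℕ), t + w * a < 1 →
      List.foldl dnfStep (t, k) (List.replicate w a) = (t + w * a, k) := by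
  intro w
  induction w with
  | zero => intro t k h; simp
  | succ w ih =>
    intro t k h
    have hc : ((w:ℝ)+1) * a = a + w * a := by ring
    push_cast at h
    rw [hc] at h
    have hwa : (0:ℝ) ≤ w * a := by positivity
    rw [List.replicate_succ, List.foldl_cons]
    have hstep : dnfStep (t, k) a = (t + a, k) := by
      simp only [dnfStep]
      rw [if_neg (by nlinarith)]
    rw [hstep, ih (t + a) k (by nlinarith)]
    congr 1
    push_cast
    ring

lemma dnf_round (a b c : ℝ) (w : ℕ) (ha : 0 < a)
    (h2 : (w:ℝ) * a + b < 1) (h3 : 1 ≤ (w:ℝ) * a + b + c) (hb : 0 ≤ b) (k : ℕ) :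
    List.foldl dnfStep (0, k) (List.replicate w a ++ [b, c]) = (0, k + 1) := by
  rw [List.foldl_append, foldl_dnf_replicate a ha w 0 k (by nlinarith)]
  have s1 : dnfStep (0 + (w:ℝ) * a, k) b = (0 + (w:ℝ) * a + b, k) := by
    simp only [dnfStep]
    rw [if_neg (by nlinarith)]
  have s2 : dnfStep (0 + (w:ℝ) * a + b, k) c = (0, k + 1) := by
    simp only [dnfStep]
    rw [if_pos (by nlinarith)]
  rw [List.foldl_cons, s1, List.foldl_cons, s2, List.foldl_nil]

lemma dnf_join (R : List ℝ) (hR : ∀ k, List.foldl dnfStep (0, k) R = (0, k + 1)) :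
    ∀ (n k : ℕ), List.foldl dnfStep (0, k) ((List.replicate n R).flatten) = (0, k + n) := by
  intro n
  induction n with
  | zero => intro k; simp
  | succ n ih =>
    intro k
    rw [List.replicate_succ, List.flatten_cons, List.foldl_append, hR, ih]
    congr 1
    omega

lemma getq_flatten_replicate (R : List ℝ) :
    ∀ (r n j : ℕ), r < n → j < R.length →
      ((List.replicate n R).flatten)[r * R.length + j]? = R[j]? := by
  intro r
  induction r with
  | zero =>
    intro n j hr hj
    obtain ⟨n', rfl⟩ : ∃ n', n = n' + 1 := ⟨n - 1, by omega⟩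
    rw [List.replicate_succ, List.flatten_cons]
    simp only [Nat.zero_mul, Nat.zero_add]
    exact List.getElem?_append_left hj
  | succ r ih =>
    intro n j hr hj
    obtain ⟨n', rfl⟩ : ∃ n', n = n' + 1 := ⟨n - 1, by omega⟩
    rw [List.replicate_succ, List.flatten_cons]
    have hge : R.length ≤ (r + 1) * R.length + j := by nlinarith [Nat.le_of_lt hj]
    rw [List.getElem?_append_right hge]
    have heq : (r + 1) * R.length + j - R.length = r * R.length + j := by
      have : (r+1) * R.length = R.length + r * R.length := by ring
      omega
    rw [heq]
    exact ih n' j (by omega) hj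

lemma get_flatten_replicate (R : List ℝ) (r n j : ℕ) (hr : r < n) (hj : j < R.length)
    (h : r * R.length + j < ((List.replicate n R).flatten).length) :
    ((List.replicate n R).flatten)[r * R.length + j]'h = R[j]'hj := by
  have := getq_flatten_replicate R r n j hr hj
  rw [List.getElem?_eq_getElem h, List.getElem?_eq_getElem hj] at this
  exact Option.some.inj this

lemma length_flatten_replicate (R : List ℝ) (n : ℕ) :
    ((List.replicate n R).flatten).length = n * R.length := by
  rw [List.length_flatten]
  simp [List.map_replicate, List.sum_replicate, Nat.smul_one_eq_cast]


lemma opt_lb (I : List ℝ) (h0 : ∀ y ∈ I, 0 ≤ y) (k : ℕ)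
    (B : Fin k → Finset (Fin I.length))
    (hne : ∀ j, (B j).Nonempty)
    (hdisj : ∀ j j', j ≠ j' → Disjoint (B j) (B j'))
    (hsum : ∀ j, 1 ≤ ∑ i ∈ B j, I.get i) :
    k ≤ optCount I := by
  classical
  set f : Fin I.length → Fin I.length :=
    fun i => if h : ∃ j, i ∈ B j then (B h.choose).min' (hne _) else i with hf
  have hmem : ∀ j, (B j).min' (hne j) ∈ B j := fun j => Finset.min'_mem _ _
  have huniq : ∀ {i : Fin I.length} {j j' : Fin k}, i ∈ B j → i ∈ B j' → j = j' := by
    intro i j j' h1 h2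
    by_contra hne'
    exact (Finset.disjoint_left.mp (hdisj _ _ hne') h1) h2
  have hfi : ∀ {i : Fin I.length} {j : Fin k}, i ∈ B j → f i = (B j).min' (hne j) := by
    intro i j hi
    have h : ∃ j, i ∈ B j := ⟨j, hi⟩
    have hj : h.choose = j := huniq h.choose_spec hi
    simp only [hf, dif_pos h, hj]
  have hcard : k ≤ (Finset.univ.filter fun b : Fin I.length =>
      1 ≤ ∑ i ∈ Finset.univ.filter (fun i => f i = b), I.get i).card := by
    have hk : k = (Finset.univ : Finset (Fin k)).card := by simp
    rw [hk]
    apply Finset.card_le_card_of_injOn (fun j => (B j).min' (hne j))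
    · intro j _
      rw [Finset.mem_coe, Finset.mem_filter]
      refine ⟨Finset.mem_univ _, le_trans (hsum j) ?_⟩
      apply Finset.sum_le_sum_of_subset_of_nonneg
      · intro i hi
        rw [Finset.mem_filter]
        exact ⟨Finset.mem_univ _, hfi hi⟩
      · intro i _ _
        exact h0 _ (by rw [List.get_eq_getElem]; exact List.getElem_mem _)
    · intro j _ j' _ hjj
      simp only at hjj
      have : (B j).min' (hne j) ∈ B j' := by rw [hjj]; exact hmem j'
      exact huniq (hmem j) this
  refine le_trans hcard ?_
  unfold optCount
  exact Finset.le_sup (f := fun f : Fin I.length → Fin I.length =>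
    (Finset.univ.filter fun b : Fin I.length =>
      1 ≤ ∑ i ∈ Finset.univ.filter (fun i => f i = b), I.get i).card) (Finset.mem_univ f)

set_option maxHeartbeats 2000000 in
lemma main_construction (y m : ℕ) (hm : 0 < m) (ε : ℝ) (hε : 0 < ε)
    (hεX : ε * ((y:ℝ)+2) < 1) :
    ∃ I : List ℝ,
      (∀ z ∈ I, z ∈ Set.Icc (1/((y:ℝ)+2) - ε) (1/((y:ℝ)+2) + ε)) ∧
      dnfCount I = m * (y+2) ∧ (m * (y+2) + m ≤ optCount I) := by
  classical
  set Y : ℝ := (y:ℝ) with hY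
  have hY0 : 0 ≤ Y := Nat.cast_nonneg y
  have hX0 : (0:ℝ) < Y + 2 := by linarith
  set sa : ℝ := 1/(Y+2) + ε/(2*(Y+2)) with hsa
  set sb : ℝ := 1/(Y+2) - ε/2 with hsb
  set sc : ℝ := 1/(Y+2) + ε with hsc
  have hεlt : ε < 1/(Y+2) := by rw [lt_div_iff₀ hX0]; linarith
  have hsa0 : 0 < sa := by positivity
  have hsb0 : 0 < sb := by rw [hsb]; linarith
  have hsc0 : 0 < sc := by positivity
  have e1 : (Y+1) * sa + sb = 1 - ε/(2*(Y+2)) := by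
    rw [hsa, hsb]; field_simp; ring
  have e2 : 1 ≤ (Y+1) * sa + sb + sc := by
    rw [e1, hsc]
    have : ε/(2*(Y+2)) ≤ ε := by
      rw [div_le_iff₀ (by linarith)]; nlinarith
    have h1X : 0 < 1/(Y+2) := by positivity
    linarith
  have e3 : (Y+1) * sa + sb < 1 := by
    rw [e1]; have : 0 < ε/(2*(Y+2)) := by positivity
    linarith
  have e4 : 1 ≤ Y * sa + sb + sc := by
    have h : Y * sa + sb + sc = 1 + ε - ε/(Y+2) := by rw [hsa, hsb, hsc]; field_simp; ring
    rw [h]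
    have : ε/(Y+2) ≤ ε := by rw [div_le_iff₀ hX0]; nlinarith
    linarith
  have e5 : 1 ≤ (Y+2) * sa := by
    have h : (Y+2) * sa = 1 + ε/2 := by rw [hsa]; field_simp
    rw [h]; linarith
  -- the input list
  set n : ℕ := m * (y+2) with hn
  have hn0 : 0 < n := by positivity
  set R : List ℝ := List.replicate (y+1) sa ++ [sb, sc] with hR
  have hRlen : R.length = y + 3 := by simp [hR]
  set I : List ℝ := (List.replicate n R).flatten with hI
  have hIlen : I.length = n * (y+3) := by rw [hI, length_flatten_replicate, hRlen]
  have hIpos : 0 < I.length := by rw [hIlen]; positivity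
  have hmem3 : ∀ z ∈ I, z = sa ∨ z = sb ∨ z = sc := by
    intro z hz
    rw [hI, List.mem_flatten] at hz
    obtain ⟨l, hl, hzl⟩ := hz
    have : l = R := List.eq_of_mem_replicate hl
    subst this
    rw [hR, List.mem_append, List.mem_replicate] at hzl
    rcases hzl with h | h
    · exact Or.inl h.2
    · simp at h; tauto
  have h0items : ∀ z ∈ I, 0 ≤ z := by
    intro z hz
    rcases hmem3 z hz with rfl | rfl | rfl <;> linarith
  refine ⟨I, ?_, ?_, ?_⟩
  · -- membership
    intro z hz
    have hd : ε/(2*(Y+2)) ≤ ε := by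
      rw [div_le_iff₀ (by linarith)]; nlinarith
    have hd0 : 0 < ε/(2*(Y+2)) := by positivity
    rcases hmem3 z hz with rfl | rfl | rfl <;>
      simp only [Set.mem_Icc, hsa, hsb, hsc] <;> constructor <;> linarith
  · -- dnf count
    have hstep : ∀ k, List.foldl dnfStep (0, k) R = (0, k + 1) := by
      intro k
      rw [hR]
      apply dnf_round sa sb sc (y+1) hsa0 _ _ (le_of_lt hsb0) k
      · push_cast; linarith [e3]
      · push_cast; linarith [e2]
    rw [dnfCount, hI, dnf_join R hstep n 0]
    simp
  -- opt count
  · have hidx : ∀ r j, r < n → j < y + 3 → r * (y+3) + j < I.length := by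
      intro r j hr hj
      rw [hIlen]
      calc r * (y+3) + j < r * (y+3) + (y+3) := by omega
        _ = (r+1) * (y+3) := by ring
        _ ≤ n * (y+3) := Nat.mul_le_mul_right _ (by omega)
    set toFin : ℕ → Fin I.length := fun i => ⟨i % I.length, Nat.mod_lt _ hIpos⟩ with htoFin
    have hval : ∀ i, i < I.length → (toFin i : ℕ) = i := by
      intro i hi; exact Nat.mod_eq_of_lt hi
    set vAt : ℕ → ℝ := fun j => if j < y+1 then sa else if j = y+1 then sb else sc with hvAt
    have hRget : ∀ j, j < y + 3 → R[j]? = some (vAt j) := by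
      intro j hj
      rcases Nat.lt_or_ge j (y+1) with h | h
      · rw [hR, List.getElem?_append_left (by simp; omega)]
        rw [List.getElem?_eq_getElem (by simp; omega), List.getElem_replicate]
        rw [hvAt]; simp [h]
      · have hj2 : j = y+1 ∨ j = y+2 := by omega
        rcases hj2 with rfl | rfl
        · rw [hR, List.getElem?_append_right (by simp)]
          simp [hvAt]
        · rw [hR, List.getElem?_append_right (by simp)]
          have : y + 2 - (List.replicate (y+1) sa).length = 1 := by simp
          rw [this]
          rw [hvAt]; simp
    have hgetv : ∀ r j, r < n → j < y + 3 → I.get (toFin (r * (y+3) + j)) = vAt j := by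
      intro r j hr hj
      have hlt : r * (y+3) + j < I.length := hidx r j hr hj
      have hq : I[r * (y+3) + j]? = some (vAt j) := by
        have := getq_flatten_replicate R r n j hr (by rw [hRlen]; exact hj)
        rw [hRlen] at this
        rw [hI]
        rw [this]
        exact hRget j hj
      rw [List.get_eq_getElem]
      have hv : (toFin (r * (y+3) + j) : ℕ) = r * (y+3) + j := hval _ hlt
      rw [List.getElem?_eq_getElem hlt] at hq
      have h2 := Option.some.inj hq
      simp only [hv]
      exact h2
    -- template sum
    have hTne : (y+1) ∈ (Finset.range (y+3)).erase y :=
      Finset.mem_erase.mpr ⟨by omega, Finset.mem_range.mpr (by omega)⟩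
    have hv1 : ∀ j, j < y+1 → vAt j = sa := by
      intro j hj; simp only [hvAt]; rw [if_pos hj]
    have hB1 : vAt (y+1) = sb := by
      simp only [hvAt]; rw [if_neg (lt_irrefl _)]; simp
    have hC1 : vAt (y+2) = sc := by
      simp only [hvAt]; rw [if_neg (by omega), if_neg (by omega)]
    have hvya : vAt y = sa := hv1 y (by omega)
    have hTsum : ∑ j ∈ (Finset.range (y+3)).erase y, vAt j = Y * sa + sb + sc := by
      have hA : ∑ j ∈ Finset.range (y+1), vAt j = (Y+1)*sa := by
        rw [Finset.sum_congr rfl (fun j hj => hv1 j (Finset.mem_range.mp hj)),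
            Finset.sum_const, Finset.card_range, nsmul_eq_mul]
        push_cast [hY]; ring
      have h0 : ∑ j ∈ Finset.range (y+3), vAt j = (Y+1)*sa + sb + sc := by
        rw [show y+3 = (y+1)+1+1 from rfl, Finset.sum_range_succ, Finset.sum_range_succ, hA,
            hB1, show y+1+1 = y+2 from rfl, hC1]
      have h1 := Finset.add_sum_erase (Finset.range (y+3)) vAt
        (Finset.mem_range.mpr (show y < y+3 by omega))
      rw [hvya] at h1
      linarith
    set T : Finset ℕ := (Finset.range (y+3)).erase y with hT
    have hTmem : ∀ j ∈ T, j < y+3 ∧ j ≠ y := by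
      intro j hj
      rw [hT, Finset.mem_erase, Finset.mem_range] at hj
      exact ⟨hj.2, hj.1⟩
    set CB : ℕ → Finset (Fin I.length) :=
      fun r => T.image (fun j => toFin (r*(y+3)+j)) with hCB
    set DB : ℕ → Finset (Fin I.length) :=
      fun q => (Finset.range (y+2)).image (fun t => toFin ((q*(y+2)+t)*(y+3)+y)) with hDB
    have hDidx : ∀ q t, q < m → t < y+2 → q*(y+2)+t < n := by
      intro q t hq ht
      rw [hn]
      calc q*(y+2)+t < q*(y+2)+(y+2) := by omega
        _ = (q+1)*(y+2) := by ring
        _ ≤ m*(y+2) := Nat.mul_le_mul_right _ (by omega)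
    have hCB_sum : ∀ r, r < n → ∑ i ∈ CB r, I.get i = Y*sa+sb+sc := by
      intro r hr
      rw [hCB]
      rw [Finset.sum_image (by
        intro j hj j' hj' he
        have h1 := hval _ (hidx r j hr (hTmem j hj).1)
        have h2 := hval _ (hidx r j' hr (hTmem j' hj').1)
        have h3 : (toFin (r*(y+3)+j) : ℕ) = (toFin (r*(y+3)+j') : ℕ) := by
          rw [show toFin (r*(y+3)+j) = toFin (r*(y+3)+j') from he]
        rw [h1, h2] at h3; omega)]
      rw [Finset.sum_congr rfl (fun j hj => hgetv r j hr (hTmem j hj).1), hTsum]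
    have hDB_sum : ∀ q, q < m → ∑ i ∈ DB q, I.get i = (Y+2)*sa := by
      intro q hq
      rw [hDB]
      rw [Finset.sum_image (by
        intro t ht t' ht' he
        have hidx1 := hidx _ y (hDidx q t hq (Finset.mem_range.mp ht)) (by omega)
        have hidx2 := hidx _ y (hDidx q t' hq (Finset.mem_range.mp ht')) (by omega)
        have heq : (q*(y+2)+t)*(y+3)+y = (q*(y+2)+t')*(y+3)+y := by
          rw [← hval _ hidx1, ← hval _ hidx2,
            show toFin ((q*(y+2)+t)*(y+3)+y) = toFin ((q*(y+2)+t')*(y+3)+y) from he]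
        have heq2 : q*(y+2)+t = q*(y+2)+t' :=
          Nat.eq_of_mul_eq_mul_right (show 0 < y+3 by omega) (by omega)
        omega)]
      rw [Finset.sum_congr rfl (fun t ht =>
        hgetv _ y (hDidx q t hq (Finset.mem_range.mp ht)) (by omega))]
      rw [Finset.sum_const, Finset.card_range, nsmul_eq_mul, hvya]
      push_cast [hY]; ring
    have hCB_mem : ∀ r, r < n → ∀ i ∈ CB r, (i:ℕ) / (y+3) = r ∧ (i:ℕ) % (y+3) ≠ y := by
      intro r hr i hi
      rw [hCB, Finset.mem_image] at hi
      obtain ⟨j, hj, rfl⟩ := hi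
      obtain ⟨hj3, hjy⟩ := hTmem j hj
      rw [hval _ (hidx r j hr hj3)]
      have hrw : r*(y+3)+j = j + (y+3)*r := by ring
      rw [hrw, Nat.add_mul_div_left _ _ (by omega), Nat.add_mul_mod_self_left,
          Nat.div_eq_of_lt hj3, Nat.mod_eq_of_lt hj3]
      exact ⟨by omega, hjy⟩
    have hDB_mem : ∀ q, q < m → ∀ i ∈ DB q,
        (i:ℕ) % (y+3) = y ∧ (i:ℕ)/(y+3)/(y+2) = q := by
      intro q hq i hi
      rw [hDB, Finset.mem_image] at hi
      obtain ⟨t, ht, rfl⟩ := hi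
      have ht2 := Finset.mem_range.mp ht
      rw [hval _ (hidx _ y (hDidx q t hq ht2) (by omega))]
      have hrw : (q*(y+2)+t)*(y+3)+y = y + (y+3)*(q*(y+2)+t) := by ring
      rw [hrw, Nat.add_mul_div_left _ _ (by omega), Nat.add_mul_mod_self_left,
          Nat.div_eq_of_lt (by omega : y < y+3), Nat.mod_eq_of_lt (by omega : y < y+3)]
      refine ⟨rfl, ?_⟩
      have hrw2 : 0 + (q*(y+2)+t) = t + (y+2)*q := by ring
      rw [hrw2, Nat.add_mul_div_left _ _ (by omega), Nat.div_eq_of_lt ht2]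
      omega
    have hCB_ne : ∀ r, (CB r).Nonempty := by
      intro r
      rw [hCB]
      exact Finset.Nonempty.image ⟨y+1, hTne⟩ _
    have hDB_ne : ∀ q, (DB q).Nonempty := by
      intro q
      rw [hDB]
      exact Finset.Nonempty.image ⟨0, Finset.mem_range.mpr (by omega)⟩ _
    set B : Fin (n+m) → Finset (Fin I.length) :=
      fun j => if j.1 < n then CB j.1 else DB (j.1 - n) with hB
    have hne : ∀ j, (B j).Nonempty := by
      intro j
      rw [hB]
      dsimp only
      split_ifs
      · exact hCB_ne _
      · exact hDB_ne _
    have hsum : ∀ j, 1 ≤ ∑ i ∈ B j, I.get i := by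
      intro j
      rw [hB]
      dsimp only
      split_ifs with h
      · rw [hCB_sum _ h]; exact e4
      · have hq : j.1 - n < m := by omega
        rw [hDB_sum _ hq]; exact e5
    have hdisj : ∀ j j', j ≠ j' → Disjoint (B j) (B j') := by
      intro j j' hjj
      rw [Finset.disjoint_left]
      intro i hi hi'
      rw [hB] at hi hi'
      dsimp only at hi hi'
      rcases Nat.lt_or_ge j.1 n with h1 | h1 <;> rcases Nat.lt_or_ge j'.1 n with h2 | h2
      · rw [if_pos h1] at hi; rw [if_pos h2] at hi'
        have a1 := (hCB_mem _ h1 i hi).1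
        have a2 := (hCB_mem _ h2 i hi').1
        exact hjj (Fin.ext (by omega))
      · rw [if_pos h1] at hi; rw [if_neg (by omega)] at hi'
        have a1 := (hCB_mem _ h1 i hi).2
        have a2 := (hDB_mem _ (by omega) i hi').1
        exact a1 a2
      · rw [if_neg (by omega)] at hi; rw [if_pos h2] at hi'
        have a1 := (hDB_mem _ (by omega) i hi).1
        have a2 := (hCB_mem _ h2 i hi').2
        exact a2 a1
      · rw [if_neg (by omega)] at hi; rw [if_neg (by omega)] at hi'
        have a1 := (hDB_mem _ (by omega) i hi).2
        have a2 := (hDB_mem _ (by omega) i hi').2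
        exact hjj (Fin.ext (by omega))
    exact opt_lb I h0items (n+m) B hne hdisj hsum

/-- For every integer `x ≥ 2` and every `ε` with `0 < ε < min (1/x) (1 - 1/x)`,
the competitive ratio of DNF restricted to item sizes in `[1/x - ε, 1/x + ε]`
is at most `x/(x+1)`. -/
theorem dnf_restricted_CR_le (x : ℕ) (hx : 2 ≤ x) (ε : ℝ) (hε : 0 < ε)
    (hε' : ε < min (1/(x:ℝ)) (1 - 1/(x:ℝ))) :
    CRrestricted (Set.Icc (1/(x:ℝ) - ε) (1/(x:ℝ) + ε)) dnfCount ≤ (x:ℝ)/((x:ℝ)+1) := by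
  obtain ⟨y, rfl⟩ : ∃ y, x = y + 2 := ⟨x - 2, by omega⟩
  have hXcast : ((y + 2 : ℕ) : ℝ) = (y:ℝ) + 2 := by push_cast; ring
  have hY0 : (0:ℝ) ≤ (y:ℝ) := Nat.cast_nonneg y
  have hX0 : (0:ℝ) < (y:ℝ) + 2 := by linarith
  have hε1 : ε < 1/((y:ℝ)+2) := by
    have h := (lt_min_iff.mp hε').1
    rwa [hXcast] at h
  have hεX : ε * ((y:ℝ)+2) < 1 := (lt_div_iff₀ hX0).mp hε1
  apply Real.sSup_le
  · rintro γ ⟨β, hβ⟩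
    rw [hXcast]
    rcases le_or_gt γ 0 with hγ | hγ
    · have : (0:ℝ) ≤ ((y:ℝ)+2)/((y:ℝ)+2+1) := by positivity
      linarith
    by_contra hcon
    push_neg at hcon
    have hg : 0 < γ * ((y:ℝ)+3) - ((y:ℝ)+2) := by
      rw [div_lt_iff₀ (by linarith : (0:ℝ) < (y:ℝ)+2+1)] at hcon
      linarith
    have key : ∀ m : ℕ, 0 < m → (γ * ((y:ℝ)+3) - ((y:ℝ)+2)) * m ≤ -β := by
      intro m hm
      obtain ⟨I, hImem, hIdnf, hIopt⟩ := main_construction y m hm ε hε hεX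
      have h1 := hβ I (by
        intro z hz
        have h := hImem z hz
        rwa [hXcast])
      have hopt : ((m*(y+2)+m : ℕ) : ℝ) ≤ (optCount I : ℝ) := Nat.cast_le.mpr hIopt
      have hdnf : (dnfCount I : ℝ) = (m:ℝ)*((y:ℝ)+2) := by rw [hIdnf]; push_cast; ring
      have hc : ((m*(y+2)+m : ℕ) : ℝ) = (m:ℝ)*((y:ℝ)+3) := by push_cast; ring
      have h2 : γ * ((m:ℝ)*((y:ℝ)+3)) + β ≤ γ * (optCount I : ℝ) + β := by
        rw [← hc]
        have := mul_le_mul_of_nonneg_left hopt (le_of_lt hγ)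
        linarith
      have h3 : γ * ((m:ℝ)*((y:ℝ)+3)) + β ≤ (m:ℝ)*((y:ℝ)+2) := by
        rw [hdnf] at h1
        linarith
      have h4 : (γ * ((y:ℝ)+3) - ((y:ℝ)+2)) * m
          = γ * ((m:ℝ)*((y:ℝ)+3)) - (m:ℝ)*((y:ℝ)+2) := by ring
      rw [h4]
      linarith
    obtain ⟨M, hM⟩ := exists_nat_gt (max 0 (-β / (γ * ((y:ℝ)+3) - ((y:ℝ)+2))))
    have hM0 : 0 < M := by
      have h : (0:ℝ) < (M:ℝ) := lt_of_le_of_lt (le_max_left _ _) hM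
      exact_mod_cast h
    have h4 := key M hM0
    have h5 : -β / (γ * ((y:ℝ)+3) - ((y:ℝ)+2)) < (M:ℝ) :=
      lt_of_le_of_lt (le_max_right _ _) hM
    rw [div_lt_iff₀ hg] at h5
    linarith
  · positivity
end

section
/- Let p ≥ 2 be an integer and (a,b) ⊆ (0,1) an interval with 1/(p+1) ≤ a < 1/p < b such that 1/p is the only point of the form 1/l (l ≥ 2 an integer) contained in (a,b). Then the competitive ratio of DNF restricted to input sequences with all item sizes in (a,b) equals p/(p+1). -/
open Filter MeasureTheory

/-! ### Auxiliary machinery for `dnf_restricted_CR_eq` -/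

section DNFAux

/-- geometric epsilon cascade -/
noncomputable def epsSeq (e : ℝ) (r : ℕ) : ℝ := e / 2^r
/-- small item of round `r` -/
noncomputable def sIt (p : ℕ) (e : ℝ) (r : ℕ) : ℝ := 1/(p:ℝ) - epsSeq e r
/-- large item of round `r` -/
noncomputable def uIt (p : ℕ) (e : ℝ) (r : ℕ) : ℝ := 1/(p:ℝ) + ((p:ℝ)-1) * epsSeq e (r+1)
/-- one adversarial round -/
noncomputable def roundL (p : ℕ) (e : ℝ) (r : ℕ) : List ℝ :=
  List.replicate (p-1) (sIt p e r) ++ [uIt p e r, uIt p e r]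
/-- the adversarial instance: `N` rounds -/
noncomputable def instL (p : ℕ) (e : ℝ) (N : ℕ) : List ℝ :=
  (List.range N).flatMap (roundL p e)
/-- the value of the item at raw index `i` -/
noncomputable def gval (p : ℕ) (e : ℝ) (i : ℕ) : ℝ :=
  if i % (p+1) < p-1 then sIt p e (i/(p+1)) else uIt p e (i/(p+1))
/-- decision function for the OPT witness, on raw indices -/
def fidx (p : ℕ) (i : ℕ) : ℕ :=
  if i % (p+1) = p then (p+1)*(p*((i/(p+1))/p)) + p
  else if i % (p+1) = p - 1 then i
  else if i / (p+1) = 0 then i else (p+1)*((i/(p+1))-1) + (p-1)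

lemma epsSeq_pos (e : ℝ) (he : 0 < e) (r : ℕ) : 0 < epsSeq e r := by
  unfold epsSeq; positivity

lemma epsSeq_le (e : ℝ) (he : 0 < e) (r : ℕ) : epsSeq e r ≤ e := by
  unfold epsSeq
  have h1 : (1:ℝ) ≤ 2^r := one_le_pow₀ (by norm_num)
  exact div_le_self he.le h1

lemma epsSeq_succ (e : ℝ) (r : ℕ) : epsSeq e (r+1) = epsSeq e r / 2 := by
  unfold epsSeq; rw [pow_succ]; ring

lemma roundL_length (p : ℕ) (hp : 2 ≤ p) (e : ℝ) (r : ℕ) : (roundL p e r).length = p + 1 := by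
  simp [roundL]; omega

lemma instL_succ (p : ℕ) (e : ℝ) (N : ℕ) :
    instL p e (N+1) = instL p e N ++ roundL p e N := by
  simp [instL, List.range_succ]

lemma instL_length (p : ℕ) (hp : 2 ≤ p) (e : ℝ) (N : ℕ) :
    (instL p e N).length = N * (p+1) := by
  induction N with
  | zero => simp [instL]
  | succ n ih => rw [instL_succ, List.length_append, ih, roundL_length p hp]; ring

lemma instL_mem (p : ℕ) (e : ℝ) (N : ℕ) (x : ℝ) (hx : x ∈ instL p e N) :
    ∃ r, x = sIt p e r ∨ x = uIt p e r := by
  rw [instL, List.mem_flatMap] at hx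
  obtain ⟨r, _, hx⟩ := hx
  rw [roundL, List.mem_append, List.mem_replicate] at hx
  refine ⟨r, ?_⟩
  rcases hx with ⟨-, h⟩ | h
  · exact Or.inl h
  · simp at h
    first
    | exact Or.inr h
    | (rcases h with h | h <;> exact Or.inr h)

lemma rep_fold (p : ℕ) (hp : 2 ≤ p) (e : ℝ) (he : 0 < e) (hep : e < 1/(p:ℝ)) (r : ℕ) (c : ℕ) :
    ∀ k, k ≤ p - 1 →
      List.foldl dnfStep (0, c) (List.replicate k (sIt p e r)) = (k * sIt p e r, c) := by
  have hppos : (0:ℝ) < p := by positivity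
  have hs_pos : 0 < sIt p e r := by
    have h1 := epsSeq_le e he r
    have h2 := epsSeq_pos e he r
    unfold sIt; linarith
  have hs_lt : sIt p e r < 1/(p:ℝ) := by
    have h2 := epsSeq_pos e he r
    unfold sIt; linarith
  intro k
  induction k with
  | zero => intro _; simp
  | succ k ih =>
    intro hk
    rw [List.replicate_succ', List.foldl_append, ih (by omega)]
    have hlt : (k:ℝ) * sIt p e r + sIt p e r < 1 := by
      have h1 : ((k:ℝ) + 1) ≤ (p:ℝ) - 1 := by
        have : (k+1 : ℕ) ≤ p - 1 := hk
        have : ((k+1 : ℕ) : ℝ) ≤ ((p-1 : ℕ) : ℝ) := by exact_mod_cast this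
        push_cast [Nat.cast_sub (by omega : 1 ≤ p)] at this
        linarith
      have h2 : ((k:ℝ)+1) * sIt p e r < ((p:ℝ)-1) * (1/(p:ℝ)) := by
        apply mul_lt_mul' h1 hs_lt hs_pos.le (by linarith)
      have h3 : ((p:ℝ)-1) * (1/(p:ℝ)) < 1 := by
        rw [mul_one_div, div_lt_one hppos]; linarith
      nlinarith
    simp only [List.foldl_cons, List.foldl_nil, dnfStep]
    rw [if_neg (by push_cast; linarith)]
    push_cast; ring_nf

lemma round_fold (p : ℕ) (hp : 2 ≤ p) (e : ℝ) (he : 0 < e) (hep : e < 1/(p:ℝ)) (r : ℕ) (c : ℕ) :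
    List.foldl dnfStep (0, c) (roundL p e r) = (0, c + 1) := by
  have hppos : (0:ℝ) < p := by positivity
  unfold roundL
  rw [List.foldl_append, rep_fold p hp e he hep r c (p-1) le_rfl]
  have hcast : ((p-1 : ℕ) : ℝ) = (p:ℝ) - 1 := by
    push_cast [Nat.cast_sub (by omega : 1 ≤ p)]; ring
  have hepr := epsSeq_pos e he r
  have hsucc := epsSeq_succ e r
  have hp2 : (2:ℝ) ≤ (p:ℝ) := by exact_mod_cast hp
  have hident : ((p:ℝ)-1) * (1/(p:ℝ)) + 1/(p:ℝ) = 1 := by field_simp; ring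
  have key1 : ((p-1:ℕ):ℝ) * sIt p e r + uIt p e r < 1 := by
    rw [hcast]
    unfold sIt uIt
    rw [hsucc]
    nlinarith [mul_pos (show (0:ℝ) < (p:ℝ)-1 by linarith) hepr]
  have key2 : 1 ≤ ((p-1:ℕ):ℝ) * sIt p e r + uIt p e r + uIt p e r := by
    rw [hcast]
    unfold sIt uIt
    rw [hsucc]
    have hd : 0 < 1/(p:ℝ) := by positivity
    nlinarith []
  have e1 : dnfStep (((p-1:ℕ):ℝ) * sIt p e r, c) (uIt p e r)
      = (((p-1:ℕ):ℝ) * sIt p e r + uIt p e r, c) := by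
    unfold dnfStep
    rw [if_neg (not_le.mpr key1)]
  have e2 : dnfStep (((p-1:ℕ):ℝ) * sIt p e r + uIt p e r, c) (uIt p e r) = (0, c+1) := by
    unfold dnfStep
    rw [if_pos key2]
  simp only [List.foldl_cons, List.foldl_nil, e1, e2]

lemma dnf_instL (p : ℕ) (hp : 2 ≤ p) (e : ℝ) (he : 0 < e) (hep : e < 1/(p:ℝ)) (N : ℕ) :
    dnfCount (instL p e N) = N := by
  suffices h : ∀ c, List.foldl dnfStep (0, c) (instL p e N) = (0, c + N) by
    unfold dnfCount; rw [h 0]; simp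
  induction N with
  | zero => intro c; simp [instL]
  | succ n ih =>
    intro c
    rw [instL_succ, List.foldl_append, ih c, round_fold p hp e he hep]
    ring_nf

lemma roundL_getElem (p : ℕ) (hp : 2 ≤ p) (e : ℝ) (r : ℕ) (q : ℕ) (hq : q < p+1)
    (h : q < (roundL p e r).length) :
    (roundL p e r)[q] = if q < p-1 then sIt p e r else uIt p e r := by
  by_cases hcase : q < p-1
  · rw [if_pos hcase]
    simp only [roundL]
    rw [List.getElem_append_left (by simp; omega)]
    exact List.getElem_replicate ..
  · rw [if_neg hcase]
    simp only [roundL]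
    rw [List.getElem_append_right (by simp; omega)]
    have : q - (List.replicate (p-1) (sIt p e r)).length = 0 ∨
        q - (List.replicate (p-1) (sIt p e r)).length = 1 := by simp; omega
    simp only [List.length_replicate] at this ⊢
    rcases this with h1 | h1 <;> simp only [h1] <;> rfl

lemma instL_getElem (p : ℕ) (hp : 2 ≤ p) (e : ℝ) (N : ℕ) (i : ℕ)
    (h : i < (instL p e N).length) :
    (instL p e N)[i] = gval p e i := by
  induction N with
  | zero => simp [instL] at h
  | succ n ih =>
    rw [List.getElem_of_eq (instL_succ p e n) h]
    rw [instL_succ] at h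
    by_cases hi : i < (instL p e n).length
    · rw [List.getElem_append_left hi]
      exact ih hi
    · push_neg at hi
      rw [List.getElem_append_right hi]
      simp only [instL_length p hp] at hi h ⊢
      rw [List.length_append, instL_length p hp, roundL_length p hp] at h
      set q := i - n * (p+1) with hqdef
      have hq : q < p + 1 := by omega
      have hiq : i = (p+1) * n + q := by
        have hcomm : (p+1) * n = n * (p+1) := Nat.mul_comm ..
        omega
      rw [roundL_getElem p hp e n q hq]
      have hmod : i % (p+1) = q := by
        rw [hiq, Nat.mul_add_mod, Nat.mod_eq_of_lt hq]
      have hdiv : i / (p+1) = n := by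
        rw [hiq, Nat.mul_add_div (by omega), Nat.div_eq_of_lt hq, Nat.add_zero]
      unfold gval
      rw [hmod, hdiv]

lemma dnf_fold_bound (p : ℕ) (a : ℝ) (ha : 0 < a) (hpa : 1 ≤ a * (p+1)) :
    ∀ (J : List ℝ), (∀ x ∈ J, a < x) → ∀ (s : ℝ) (c m : ℕ), 0 ≤ s → s < 1 → a * m ≤ s →
    ∃ m' : ℕ, 0 ≤ (J.foldl dnfStep (s,c)).1 ∧ (J.foldl dnfStep (s,c)).1 < 1 ∧
      a * m' ≤ (J.foldl dnfStep (s,c)).1 ∧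
      m + J.length + (p+1)*c ≤ (p+1)*(J.foldl dnfStep (s,c)).2 + m' := by
  intro J
  induction J with
  | nil =>
    intro _ s c m h0 h1 hm
    exact ⟨m, h0, h1, hm, by simp; omega⟩
  | cons x J ih =>
    intro hmem s c m h0 h1 hm
    have hx : a < x := hmem x (by simp)
    have hmp : m ≤ p := by
      have : a * m < a * (p+1) := lt_of_le_of_lt hm (lt_of_lt_of_le h1 hpa)
      have := (mul_lt_mul_iff_right₀ ha).mp this
      have : (m : ℝ) < ((p:ℕ) : ℝ) + 1 := by push_cast at this ⊢; linarith
      exact_mod_cast Nat.lt_succ_iff.mp (by exact_mod_cast this)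
    simp only [List.foldl_cons]
    by_cases hcl : 1 ≤ s + x
    · rw [show dnfStep (s,c) x = (0, c+1) by simp [dnfStep, hcl]]
      obtain ⟨m', h0', h1', hm', hcount⟩ := ih (fun y hy => hmem y (by simp [hy])) 0 (c+1) 0
        le_rfl one_pos (by simp)
      refine ⟨m', h0', h1', hm', ?_⟩
      simp only [List.length_cons]
      have hms : (p+1)*(c+1) = (p+1)*c + (p+1) := by ring
      omega
    · rw [show dnfStep (s,c) x = (s+x, c) by simp [dnfStep, hcl]]
      obtain ⟨m', h0', h1', hm', hcount⟩ := ih (fun y hy => hmem y (by simp [hy])) (s+x) c (m+1)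
        (by linarith) (by linarith) (by push_cast; linarith)
      refine ⟨m', h0', h1', hm', ?_⟩
      simp only [List.length_cons]
      omega

lemma length_le_dnf (p : ℕ) (a : ℝ) (ha : 0 < a) (hpa : 1 ≤ a * (p+1))
    (I : List ℝ) (hI : ∀ x ∈ I, a < x) :
    I.length ≤ (p+1) * dnfCount I + p := by
  obtain ⟨m', h0, h1, hm', hcount⟩ :=
    dnf_fold_bound p a ha hpa I hI 0 0 0 le_rfl one_pos (by simp)
  have hmp : m' ≤ p := by
    have h2 : a * m' < a * (p+1) := lt_of_le_of_lt hm' (lt_of_lt_of_le h1 hpa)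
    have h3 := (mul_lt_mul_iff_right₀ ha).mp h2
    have h4 : (m' : ℝ) < ((p:ℕ) : ℝ) + 1 := by push_cast at h3 ⊢; linarith
    exact_mod_cast Nat.lt_succ_iff.mp (by exact_mod_cast h4)
  simp only [dnfCount]
  omega

lemma opt_mul_le (p : ℕ) (hp : 2 ≤ p) (I : List ℝ)
    (h : ∀ x ∈ I, 0 < x ∧ x < 1/((p:ℝ)-1)) :
    p * optCount I ≤ I.length := by
  have hp0 : 0 < p := by omega
  have hcalc : optCount I ≤ I.length / p := by
    apply Finset.sup_le
    intro f _
    rw [Nat.le_div_iff_mul_le hp0]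
    set C := (Finset.univ.filter fun b : Fin I.length =>
      1 ≤ ∑ i ∈ Finset.univ.filter (fun i => f i = b), I.get i) with hC
    have key : ∀ b ∈ C, p ≤ (Finset.univ.filter (fun i => f i = b)).card := by
      intro b hb
      rw [hC, Finset.mem_filter] at hb
      obtain ⟨-, hsum⟩ := hb
      set fib := Finset.univ.filter (fun i : Fin I.length => f i = b) with hfib
      have hne : fib.Nonempty := by
        by_contra hne
        rw [Finset.not_nonempty_iff_eq_empty] at hne
        rw [hne] at hsum; simp at hsum; linarith
      have hB0 : (0:ℝ) < (p:ℝ) - 1 := by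
        have : (2:ℝ) ≤ p := by exact_mod_cast hp
        linarith
      have hlt : ∑ i ∈ fib, I.get i < ∑ i ∈ fib, 1/((p:ℝ)-1) :=
        Finset.sum_lt_sum_of_nonempty hne (fun i _ => (h _ (List.get_mem I i)).2)
      rw [Finset.sum_const, nsmul_eq_mul] at hlt
      have h2 : (1:ℝ) < fib.card * (1/((p:ℝ)-1)) := lt_of_le_of_lt hsum hlt
      have h3 : ((p:ℝ)-1) < fib.card := by
        rw [mul_one_div, lt_div_iff₀ hB0] at h2; linarith
      have h4 : ((p:ℝ)) < (fib.card : ℝ) + 1 := by linarith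
      have h5 : p < fib.card + 1 := by exact_mod_cast h4
      omega
    have hfibers : (Finset.univ.filter (fun i : Fin I.length => f i ∈ C)).card
        = ∑ b ∈ C, (Finset.filter (fun i => f i = b)
            (Finset.univ.filter (fun i : Fin I.length => f i ∈ C))).card := by
      apply Finset.card_eq_sum_card_fiberwise
      intro x hx
      exact (Finset.mem_filter.mp hx).2
    have heqfib : ∀ b ∈ C, (Finset.filter (fun i => f i = b)
        (Finset.univ.filter (fun i : Fin I.length => f i ∈ C)))
        = Finset.univ.filter (fun i => f i = b) := by
      intro b hb
      ext i
      simp only [Finset.mem_filter, Finset.mem_univ, true_and]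
      constructor
      · rintro ⟨-, h2⟩; exact h2
      · intro h2; exact ⟨h2 ▸ hb, h2⟩
    have hsum_ge : C.card * p ≤ ∑ b ∈ C, (Finset.univ.filter (fun i => f i = b)).card := by
      calc C.card * p = ∑ _b ∈ C, p := by rw [Finset.sum_const, smul_eq_mul]
      _ ≤ _ := Finset.sum_le_sum key
    have hle : ∑ b ∈ C, (Finset.univ.filter (fun i : Fin I.length => f i = b)).card
        ≤ I.length := by
      have e1 : ∑ b ∈ C, (Finset.univ.filter (fun i : Fin I.length => f i = b)).card
          = ∑ b ∈ C, (Finset.filter (fun i => f i = b)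
            (Finset.univ.filter (fun i : Fin I.length => f i ∈ C))).card :=
        Finset.sum_congr rfl (fun b hb => by rw [heqfib b hb])
      rw [e1, ← hfibers]
      calc _ ≤ (Finset.univ : Finset (Fin I.length)).card := Finset.card_filter_le _ _
      _ = I.length := by simp
    omega
  calc p * optCount I ≤ p * (I.length / p) := Nat.mul_le_mul_left p hcalc
  _ ≤ I.length := Nat.mul_div_le _ _

lemma opt_ge_of (I : List ℝ) (f : Fin I.length → Fin I.length) (B : Finset (Fin I.length))
    (hB : ∀ b ∈ B, 1 ≤ ∑ i ∈ Finset.univ.filter (fun i => f i = b), I.get i) :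
    B.card ≤ optCount I := by
  have h1 : B ⊆ Finset.univ.filter (fun b : Fin I.length =>
      1 ≤ ∑ i ∈ Finset.univ.filter (fun i => f i = b), I.get i) := by
    intro b hb
    exact Finset.mem_filter.mpr ⟨Finset.mem_univ _, hB b hb⟩
  unfold optCount
  exact le_trans (Finset.card_le_card h1)
    (Finset.le_sup (f := fun f : Fin I.length → Fin I.length =>
      (Finset.univ.filter fun b : Fin I.length =>
        1 ≤ ∑ i ∈ Finset.univ.filter (fun i => f i = b), I.get i).card) (Finset.mem_univ f))

lemma covered_of (I : List ℝ) (hpos : ∀ x ∈ I, 0 < x)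
    (f : Fin I.length → Fin I.length) (b : Fin I.length) (K : ℕ) (g : ℕ → Fin I.length)
    (hinj : ∀ j < K, ∀ j' < K, g j = g j' → j = j')
    (hf : ∀ j < K, f (g j) = b)
    (hsum : 1 ≤ ∑ j ∈ Finset.range K, I.get (g j)) :
    1 ≤ ∑ i ∈ Finset.univ.filter (fun i => f i = b), I.get i := by
  have himg : (Finset.range K).image g ⊆ Finset.univ.filter (fun i => f i = b) := by
    intro i hi
    obtain ⟨j, hj, rfl⟩ := Finset.mem_image.mp hi
    exact Finset.mem_filter.mpr ⟨Finset.mem_univ _, hf j (Finset.mem_range.mp hj)⟩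
  have heq : ∑ i ∈ (Finset.range K).image g, I.get i = ∑ j ∈ Finset.range K, I.get (g j) :=
    Finset.sum_image (fun j hj j' hj' h =>
      hinj j (Finset.mem_range.mp hj) j' (Finset.mem_range.mp hj') h)
  calc (1:ℝ) ≤ ∑ j ∈ Finset.range K, I.get (g j) := hsum
  _ = ∑ i ∈ (Finset.range K).image g, I.get i := heq.symm
  _ ≤ _ := Finset.sum_le_sum_of_subset_of_nonneg himg
      (fun i _ _ => (hpos _ (List.get_mem I i)).le)

lemma sum_range_ite (K : ℕ) (A B : ℝ) :
    ∑ j ∈ Finset.range (K+1), (if j < K then A else B) = K * A + B := by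
  rw [Finset.sum_range_succ, if_neg (lt_irrefl K)]
  have h : ∑ j ∈ Finset.range K, (if j < K then A else B) = ∑ _j ∈ Finset.range K, A :=
    Finset.sum_congr rfl (fun j hj => if_pos (Finset.mem_range.mp hj))
  rw [h, Finset.sum_const, Finset.card_range, nsmul_eq_mul]

lemma mod_eval (p r q : ℕ) (hq : q < p + 1) : ((p+1)*r + q) % (p+1) = q := by
  rw [Nat.mul_add_mod, Nat.mod_eq_of_lt hq]

lemma div_eval (p r q : ℕ) (hq : q < p + 1) : ((p+1)*r + q) / (p+1) = r := by
  rw [Nat.mul_add_div (by omega), Nat.div_eq_of_lt hq, Nat.add_zero]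

lemma fidx_small (p : ℕ) (hp : 2 ≤ p) (r j : ℕ) (hj : j < p - 1) :
    fidx p ((p+1)*(r+1) + j) = (p+1)*r + (p-1) := by
  unfold fidx
  rw [mod_eval p (r+1) j (by omega), div_eval p (r+1) j (by omega)]
  rw [if_neg (by omega), if_neg (by omega), if_neg (by omega)]
  simp

lemma fidx_arep (p : ℕ) (hp : 2 ≤ p) (r : ℕ) :
    fidx p ((p+1)*r + (p-1)) = (p+1)*r + (p-1) := by
  unfold fidx
  rw [mod_eval p r (p-1) (by omega)]
  rw [if_neg (by omega), if_pos rfl]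

lemma fidx_brep (p : ℕ) (hp : 2 ≤ p) (k j : ℕ) (hj : j < p) :
    fidx p ((p+1)*(p*k + j) + p) = (p+1)*(p*k) + p := by
  unfold fidx
  rw [mod_eval p (p*k+j) p (by omega), div_eval p (p*k+j) p (by omega)]
  rw [if_pos rfl, Nat.mul_add_div (by omega), Nat.div_eq_of_lt hj]
  simp

lemma idx_lt (p N r q : ℕ) (hr : r < N) (hq : q ≤ p) : (p+1)*r + q < N * (p+1) := by
  have h1 : (p+1)*r + q < (p+1)*(r+1) := by
    have : (p+1)*(r+1) = (p+1)*r + (p+1) := by ring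
    omega
  have h2 : (p+1)*(r+1) ≤ (p+1)*N := Nat.mul_le_mul_left _ (by omega)
  have h3 : (p+1)*N = N*(p+1) := Nat.mul_comm _ _
  omega

lemma opt_instL (p : ℕ) (hp : 2 ≤ p) (e : ℝ) (he : 0 < e) (hep : e < 1/(p:ℝ))
    (M : ℕ) (hM : 0 < M) :
    (p*M - 1) + M ≤ optCount (instL p e (p*M)) := by
  set N := p * M with hN
  have hNpos : 0 < N := Nat.mul_pos (by omega) hM
  set I := instL p e N with hIdef
  have hlen : I.length = N * (p+1) := instL_length p hp e N
  have npos : 0 < I.length := by rw [hlen]; exact Nat.mul_pos hNpos (by omega)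
  have hppos : (0:ℝ) < p := by positivity
  have hp2 : (2:ℝ) ≤ (p:ℝ) := by exact_mod_cast hp
  have hpos : ∀ x ∈ I, 0 < x := by
    intro x hx
    obtain ⟨r, h | h⟩ := instL_mem p e N x hx
    · have h1 := epsSeq_le e he r
      rw [h]; unfold sIt; linarith
    · rw [h]; unfold uIt
      have h2 : (0:ℝ) ≤ ((p:ℝ)-1) * epsSeq e (r+1) :=
        mul_nonneg (by linarith) (epsSeq_pos e he (r+1)).le
      have h3 : (0:ℝ) < 1/(p:ℝ) := by positivity
      linarith
  have hget : ∀ i : Fin I.length, I.get i = gval p e i.1 := by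
    intro i
    rw [List.get_eq_getElem]
    exact instL_getElem p hp e N i.1 i.2
  set ι : ℕ → Fin I.length := fun x => ⟨x % I.length, Nat.mod_lt x npos⟩ with hι
  have hιval : ∀ x, x < I.length → (ι x).1 = x := fun x hx => Nat.mod_eq_of_lt hx
  set f : Fin I.length → Fin I.length := fun i => ι (fidx p i.1) with hf
  have hfval : ∀ x, x < I.length → f (ι x) = ι (fidx p x) := by
    intro x hx
    show ι (fidx p ((ι x)).1) = ι (fidx p x)
    rw [hιval x hx]
  -- the A-type bins are covered
  have covA : ∀ r, r < N - 1 → 1 ≤ ∑ i ∈ Finset.univ.filter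
      (fun i => f i = ι ((p+1)*r + (p-1))), I.get i := by
    intro r hr
    have hrep_lt : (p+1)*r + (p-1) < I.length := by
      rw [hlen]; exact idx_lt p N r (p-1) (by omega) (by omega)
    have hsm_lt : ∀ j, j < p-1 → (p+1)*(r+1) + j < I.length := by
      intro j hj; rw [hlen]; exact idx_lt p N (r+1) j (by omega) (by omega)
    have hexp : (p+1)*(r+1) = (p+1)*r + (p+1) := by ring
    apply covered_of I hpos f _ p
      (fun j => if j < p-1 then ι ((p+1)*(r+1)+j) else ι ((p+1)*r+(p-1)))
    · intro j hj j' hj' hgg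
      have hval := congrArg Fin.val hgg
      by_cases c1 : j < p-1 <;> by_cases c2 : j' < p-1
      · rw [if_pos c1, if_pos c2, hιval _ (hsm_lt j c1), hιval _ (hsm_lt j' c2)] at hval
        omega
      · rw [if_pos c1, if_neg c2, hιval _ (hsm_lt j c1), hιval _ hrep_lt] at hval
        omega
      · rw [if_neg c1, if_pos c2, hιval _ hrep_lt, hιval _ (hsm_lt j' c2)] at hval
        omega
      · omega
    · intro j hj
      by_cases c1 : j < p-1
      · rw [if_pos c1, hfval _ (hsm_lt j c1), fidx_small p hp r j c1]
      · rw [if_neg c1, hfval _ hrep_lt, fidx_arep p hp r]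
    · have hterms : ∀ j ∈ Finset.range p,
          I.get (if j < p-1 then ι ((p+1)*(r+1)+j) else ι ((p+1)*r+(p-1)))
          = if j < p-1 then sIt p e (r+1) else uIt p e r := by
        intro j hj
        by_cases c1 : j < p-1
        · rw [if_pos c1, if_pos c1, hget, hιval _ (hsm_lt j c1)]
          unfold gval
          rw [mod_eval p (r+1) j (by omega), div_eval p (r+1) j (by omega), if_pos c1]
        · rw [if_neg c1, if_neg c1, hget, hιval _ hrep_lt]
          unfold gval
          rw [mod_eval p r (p-1) (by omega), div_eval p r (p-1) (by omega), if_neg (by omega)]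
      rw [Finset.sum_congr rfl hterms]
      rw [show Finset.range p = Finset.range ((p-1)+1) by congr 1; omega]
      rw [sum_range_ite (p-1) (sIt p e (r+1)) (uIt p e r)]
      have hc : ((p-1:ℕ):ℝ) = (p:ℝ)-1 := by
        push_cast [Nat.cast_sub (show 1 ≤ p by omega)]; ring
      rw [hc]
      unfold sIt uIt
      apply le_of_eq
      field_simp
      ring
  -- the B-type bins are covered
  have covB : ∀ k, k < M → 1 ≤ ∑ i ∈ Finset.univ.filter
      (fun i => f i = ι ((p+1)*(p*k) + p)), I.get i := by
    intro k hk
    have hrange : ∀ j, j < p → p*k + j < N := by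
      intro j hj
      have h1 : p*(k+1) ≤ p*M := Nat.mul_le_mul_left _ (by omega)
      have h2 : p*(k+1) = p*k + p := by ring
      omega
    have hmem_lt : ∀ j, j < p → (p+1)*(p*k+j) + p < I.length := by
      intro j hj; rw [hlen]
      exact idx_lt p N (p*k+j) p (hrange j hj) le_rfl
    apply covered_of I hpos f _ p (fun j => ι ((p+1)*(p*k+j) + p))
    · intro j hj j' hj' hgg
      have hval := congrArg Fin.val hgg
      rw [hιval _ (hmem_lt j hj), hιval _ (hmem_lt j' hj')] at hval
      have h1 : (p+1)*(p*k+j) = (p+1)*(p*k+j') := by omega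
      have h2 := Nat.eq_of_mul_eq_mul_left (show 0 < p+1 by omega) h1
      omega
    · intro j hj
      rw [hfval _ (hmem_lt j hj), fidx_brep p hp k j hj]
    · have hterms : ∀ j ∈ Finset.range p, (1:ℝ)/(p:ℝ) ≤ I.get (ι ((p+1)*(p*k+j) + p)) := by
        intro j hj
        rw [hget, hιval _ (hmem_lt j (Finset.mem_range.mp hj))]
        unfold gval
        rw [mod_eval p (p*k+j) p (by omega), div_eval p (p*k+j) p (by omega),
          if_neg (by omega)]
        unfold uIt
        have h2 : (0:ℝ) ≤ ((p:ℝ)-1) * epsSeq e (p*k+j+1) :=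
          mul_nonneg (by linarith) (epsSeq_pos e he _).le
        linarith
      calc (1:ℝ) = ∑ _j ∈ Finset.range p, 1/(p:ℝ) := by
            rw [Finset.sum_const, Finset.card_range, nsmul_eq_mul, mul_one_div,
              div_self (by positivity)]
      _ ≤ _ := Finset.sum_le_sum hterms
  -- assemble the family of covered bins
  have hAR_lt : ∀ r, r < N-1 → (p+1)*r+(p-1) < I.length := by
    intro r hr; rw [hlen]; exact idx_lt p N r (p-1) (by omega) (by omega)
  have hBR_lt : ∀ k, k < M → (p+1)*(p*k)+p < I.length := by
    intro k hk; rw [hlen]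
    refine idx_lt p N (p*k) p ?_ le_rfl
    have h1 : p*(k+1) ≤ p*M := Nat.mul_le_mul_left _ (by omega)
    have h2 : p*(k+1) = p*k + p := by ring
    omega
  set B := ((Finset.range (N-1)).image (fun r => ι ((p+1)*r + (p-1)))) ∪
    ((Finset.range M).image (fun k => ι ((p+1)*(p*k) + p))) with hB
  have hdisj : Disjoint ((Finset.range (N-1)).image (fun r => ι ((p+1)*r + (p-1))))
      ((Finset.range M).image (fun k => ι ((p+1)*(p*k) + p))) := by
    rw [Finset.disjoint_left]
    intro x hx1 hx2
    obtain ⟨r, hr, hrx⟩ := Finset.mem_image.mp hx1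
    obtain ⟨k, hk, hkx⟩ := Finset.mem_image.mp hx2
    rw [Finset.mem_range] at hr hk
    have hval : (p+1)*r+(p-1) = (p+1)*(p*k)+p := by
      have := congrArg Fin.val (hrx.trans hkx.symm)
      rwa [hιval _ (hAR_lt r hr), hιval _ (hBR_lt k hk)] at this
    have h1 : ((p+1)*r+(p-1)) % (p+1) = ((p+1)*(p*k)+p) % (p+1) := by rw [hval]
    rw [mod_eval p r (p-1) (by omega), mod_eval p (p*k) p (by omega)] at h1
    omega
  have hcard : B.card = (N-1) + M := by
    rw [hB, Finset.card_union_of_disjoint hdisj,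
      Finset.card_image_of_injOn, Finset.card_image_of_injOn,
      Finset.card_range, Finset.card_range]
    · intro k hk k' hk' hkk
      rw [Finset.mem_coe, Finset.mem_range] at hk hk'
      have hval := congrArg Fin.val hkk
      rw [hιval _ (hBR_lt k hk), hιval _ (hBR_lt k' hk')] at hval
      have h1 : (p+1)*(p*k) = (p+1)*(p*k') := by omega
      have h2 := Nat.eq_of_mul_eq_mul_left (show 0 < p+1 by omega) h1
      have h3 := Nat.eq_of_mul_eq_mul_left (show 0 < p by omega) h2
      exact h3
    · intro r hr r' hr' hrr
      rw [Finset.mem_coe, Finset.mem_range] at hr hr'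
      have hval := congrArg Fin.val hrr
      rw [hιval _ (hAR_lt r hr), hιval _ (hAR_lt r' hr')] at hval
      have h1 : (p+1)*r = (p+1)*r' := by omega
      exact Nat.eq_of_mul_eq_mul_left (show 0 < p+1 by omega) h1
  have hBcov : ∀ b ∈ B, 1 ≤ ∑ i ∈ Finset.univ.filter (fun i => f i = b), I.get i := by
    intro b hb
    rw [hB, Finset.mem_union] at hb
    rcases hb with hb | hb
    · obtain ⟨r, hr, rfl⟩ := Finset.mem_image.mp hb
      exact covA r (Finset.mem_range.mp hr)
    · obtain ⟨k, hk, rfl⟩ := Finset.mem_image.mp hb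
      exact covB k (Finset.mem_range.mp hk)
  have hfin := opt_ge_of I f B hBcov
  rw [hcard] at hfin
  omega

end DNFAux

/-- If `(a,b) ⊆ (0,1)` with `1/(p+1) ≤ a < 1/p < b` and `1/p` is the only point of
the form `1/l` (integer `l ≥ 2`) in `(a,b)`, then the competitive ratio of DNF
restricted to item sizes in `(a,b)` equals `p/(p+1)`. -/
theorem dnf_restricted_CR_eq (p : ℕ) (hp : 2 ≤ p) (a b : ℝ)
    (hsub : Set.Ioo a b ⊆ Set.Ioo (0:ℝ) 1)
    (ha1 : 1/((p:ℝ)+1) ≤ a) (ha2 : a < 1/(p:ℝ)) (hb : 1/(p:ℝ) < b)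
    (honly : ∀ l : ℕ, 2 ≤ l → (1/(l:ℝ)) ∈ Set.Ioo a b → l = p) :
    CRrestricted (Set.Ioo a b) dnfCount = (p:ℝ)/((p:ℝ)+1) := by
  have hppos : (0:ℝ) < p := by positivity
  have hp1pos : (0:ℝ) < (p:ℝ)+1 := by positivity
  have hinv : (0:ℝ) < 1/(p:ℝ) := by positivity
  have ha0 : 0 < a := lt_of_lt_of_le (by positivity) ha1
  have hp2 : (2:ℝ) ≤ (p:ℝ) := by exact_mod_cast hp
  -- b ≤ 1
  have hble1 : b ≤ 1 := by
    by_contra h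
    push_neg at h
    have h1p : 1/(p:ℝ) < 1 := by
      rw [div_lt_one hppos]; linarith
    exact absurd (hsub ⟨lt_trans ha2 h1p, h⟩).2 (lt_irrefl 1)
  -- b ≤ 1/(p-1)
  have hb1 : b ≤ 1/((p:ℝ)-1) := by
    rcases eq_or_lt_of_le hp with hpe | hpl
    · have hc2 : ((p:ℕ):ℝ) = 2 := by rw [← hpe]; norm_num
      rw [hc2]; norm_num; exact hble1
    · by_contra h
      push_neg at h
      have hm1 : (0:ℝ) < (p:ℝ) - 1 := by linarith
      have hlt : 1/(p:ℝ) < 1/((p:ℝ)-1) := by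
        apply one_div_lt_one_div_of_lt hm1; linarith
      have hmem : 1/((p:ℝ)-1) ∈ Set.Ioo a b := ⟨lt_trans ha2 hlt, h⟩
      have hcast : ((p-1:ℕ):ℝ) = (p:ℝ)-1 := by
        push_cast [Nat.cast_sub (show 1 ≤ p by omega)]; ring
      have := honly (p-1) (by omega) (by rw [hcast]; exact hmem)
      omega
  have hpa : 1 ≤ a * ((p:ℝ)+1) := (div_le_iff₀ hp1pos).mp ha1
  -- the set defining CRrestricted
  unfold CRrestricted
  apply IsGreatest.csSup_eq
  constructor
  · -- membership: DNF is p/(p+1)-competitive with additive constant -1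
    refine ⟨-1, fun I hI => ?_⟩
    have hIa : ∀ x ∈ I, a < x := fun x hx => (hI x hx).1
    have hlen := length_le_dnf p a ha0 hpa I hIa
    have hopt := opt_mul_le p hp I (fun x hx =>
      ⟨lt_trans ha0 (hI x hx).1, lt_of_lt_of_le (hI x hx).2 hb1⟩)
    have h1 : ((p:ℝ)) * (optCount I : ℝ) ≤ (I.length : ℝ) := by exact_mod_cast hopt
    have h2 : (I.length : ℝ) ≤ ((p:ℝ)+1) * (dnfCount I : ℝ) + p := by exact_mod_cast hlen
    have h3 : (p:ℝ)/((p:ℝ)+1) * (optCount I : ℝ)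
        = ((p:ℝ) * (optCount I : ℝ))/((p:ℝ)+1) := by ring
    rw [h3]
    have h4 : ((p:ℝ) * (optCount I : ℝ))/((p:ℝ)+1)
        ≤ (((p:ℝ)+1) * (dnfCount I : ℝ) + (((p:ℝ)+1)))/((p:ℝ)+1) := by
      apply div_le_div_of_nonneg_right ?_ hp1pos.le
      linarith
    have h5 : (((p:ℝ)+1) * (dnfCount I : ℝ) + (((p:ℝ)+1)))/((p:ℝ)+1)
        = (dnfCount I : ℝ) + 1 := by field_simp
    rw [h5] at h4
    linarith
  · -- upper bound: no c > p/(p+1) is achievable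
    rintro c ⟨β, hβ⟩
    by_contra hcon
    push_neg at hcon
    have hcpos : 0 < c := lt_of_le_of_lt (by positivity) hcon
    have hD : 0 < c*((p:ℝ)+1) - p := by
      have := (div_lt_iff₀ hp1pos).mp hcon
      linarith
    set e := min ((1/(p:ℝ) - a)/2) ((b - 1/(p:ℝ))/(2*(p:ℝ))) with hedef
    have he : 0 < e := lt_min (by linarith) (by apply div_pos; linarith; positivity)
    have hep : e < 1/(p:ℝ) :=
      lt_of_le_of_lt (min_le_left _ _) (by linarith)
    have hmem : ∀ M : ℕ, ∀ x ∈ instL p e (p*M), x ∈ Set.Ioo a b := by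
      intro M x hx
      obtain ⟨r, h | h⟩ := instL_mem p e (p*M) x hx
      · have h1 := epsSeq_le e he r
        have h2 := epsSeq_pos e he r
        have h3 : e ≤ (1/(p:ℝ) - a)/2 := min_le_left _ _
        constructor
        · rw [h]; unfold sIt; linarith
        · rw [h]; unfold sIt; linarith
      · have h1 := epsSeq_le e he (r+1)
        have h2 := epsSeq_pos e he (r+1)
        have h3 : e ≤ (b - 1/(p:ℝ))/(2*(p:ℝ)) := min_le_right _ _
        have h4 : ((p:ℝ)-1) * epsSeq e (r+1) ≤ ((p:ℝ)-1)*e :=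
          mul_le_mul_of_nonneg_left h1 (by linarith)
        have h5 : ((p:ℝ)-1)*e ≤ (p:ℝ)*e :=
          mul_le_mul_of_nonneg_right (by linarith) he.le
        have h6 : (p:ℝ)*e ≤ (p:ℝ)*((b - 1/(p:ℝ))/(2*(p:ℝ))) :=
          mul_le_mul_of_nonneg_left h3 (by positivity)
        have h7 : (p:ℝ)*((b - 1/(p:ℝ))/(2*(p:ℝ))) = (b - 1/(p:ℝ))/2 := by
          field_simp
        have h8 : (0:ℝ) ≤ ((p:ℝ)-1) * epsSeq e (r+1) :=
          mul_nonneg (by linarith) h2.le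
        constructor
        · rw [h]; unfold uIt; linarith
        · rw [h]; unfold uIt; linarith
    have hineq : ∀ M : ℕ, 0 < M → (M:ℝ) * (c*((p:ℝ)+1) - p) ≤ c - β := by
      intro M hM
      have h1 := hβ (instL p e (p*M)) (hmem M)
      rw [dnf_instL p hp e he hep (p*M)] at h1
      have h2 := opt_instL p hp e he hep M hM
      have h3 : ((p*M - 1 + M : ℕ) : ℝ) ≤ (optCount (instL p e (p*M)) : ℝ) := by
        exact_mod_cast h2
      have hge1 : 1 ≤ p*M := Nat.one_le_iff_ne_zero.mpr (by positivity)
      have hc1 : ((p*M - 1 + M : ℕ) : ℝ) = (p:ℝ)*M + M - 1 := by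
        push_cast [Nat.cast_sub hge1]; ring
      rw [hc1] at h3
      have h4 : c * ((p:ℝ)*M + M - 1) ≤ c * (optCount (instL p e (p*M)) : ℝ) :=
        mul_le_mul_of_nonneg_left h3 hcpos.le
      have h6 : ((p*M:ℕ):ℝ) = (p:ℝ)*M := by push_cast; ring
      rw [h6] at h1
      nlinarith [h1, h4]
    obtain ⟨M0, hM0⟩ := exists_nat_gt ((c - β)/(c*((p:ℝ)+1) - p))
    have h8 := hineq (M0+1) (Nat.succ_pos _)
    have h9 : (c - β)/(c*((p:ℝ)+1) - p) < ((M0+1 : ℕ):ℝ) := by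
      push_cast
      push_cast at hM0
      linarith
    rw [div_lt_iff₀ hD] at h9
    have h10 : ((M0+1:ℕ):ℝ) * (c*((p:ℝ)+1) - p) ≤ c - β := h8
    linarith
end

section
/- Let p ≥ 2 be an integer, (a,b) ⊆ (0,1) an interval with 1/(p+1) ≤ a < 1/p < b such that 1/p is the only point of the form 1/l (l ≥ 2 an integer) contained in (a,b), and let k ≥ p. Then the competitive ratio of DH_k restricted to input sequences with all item sizes in (a,b) equals (p² + 1)/(p(p+1)). -/
open Filter MeasureTheory

lemma natkey (q i j : ℕ) (h : (q+2)*(q+1) < i*(q+2) + j*(q+1)) :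
    (q+2)*(q+2)+1 ≤ i*(q+3) + j*(q+2) := by
  by_contra hW
  push_neg at hW
  rcases le_or_gt (q+2) i with hi | hi
  · nlinarith
  · have key : (q+1)*(i*(q+3)+j*(q+2)) + i = (q+2)*(i*(q+2)+j*(q+1)) := by ring
    have h3 : (q+2)*((q+2)*(q+1)+1) ≤ (q+2)*(i*(q+2)+j*(q+1)) :=
      Nat.mul_le_mul_left _ h
    have h4 : (q+1)*(i*(q+3)+j*(q+2)) ≤ (q+1)*((q+2)*(q+2)) :=
      Nat.mul_le_mul_left _ (by omega)
    have h5 : (q+2)*((q+2)*(q+1)+1) = (q+1)*((q+2)*(q+2)) + (q+2) := by ring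
    omega

lemma nat_div_cast_ge (n m : ℕ) (hm : 0 < m) : (n:ℝ)/m - 1 ≤ ((n/m : ℕ) : ℝ) := by
  have h1 := Nat.div_add_mod n m
  have h2 : n % m < m := Nat.mod_lt _ hm
  have hm' : (0:ℝ) < m := by exact_mod_cast hm
  rw [sub_le_iff_le_add, div_le_iff₀ hm']
  have h1' : (m:ℝ) * ((n/m : ℕ):ℝ) + ((n % m : ℕ):ℝ) = (n:ℝ) := by exact_mod_cast h1
  have h2' : ((n % m : ℕ):ℝ) < (m:ℝ) := by exact_mod_cast h2
  nlinarith

lemma countP_ofFn {n : ℕ} (g : Fin n → ℝ) (q : ℝ → Bool) :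
    (List.ofFn g).countP q = ∑ i : Fin n, if q (g i) then 1 else 0 := by
  induction n with
  | zero => simp
  | succ n ih =>
    rw [List.ofFn_succ, List.countP_cons, Fin.sum_univ_succ, ih]
    simp [Nat.add_comm]

lemma countP_card (I : List ℝ) (q : ℝ → Bool) :
    I.countP q = (Finset.univ.filter fun i : Fin I.length => q (I.get i) = true).card := by
  conv_lhs => rw [← List.ofFn_get I]
  rw [countP_ofFn, Finset.card_filter]

lemma dnf_run (p : ℕ) (hp : 2 ≤ p) :
    ∀ (I J : List ℝ) (c : ℕ),
    (∀ x ∈ I, 1/((p:ℝ)+1) < x ∧ x < 1/(p:ℝ)) →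
    (∀ x ∈ J, 1/((p:ℝ)+1) < x ∧ x < 1/(p:ℝ)) →
    J.length ≤ p →
    (I.foldl dnfStep (J.sum, c)).2 = c + (J.length + I.length) / (p+1) := by
  intro I
  induction I with
  | nil =>
    intro J c _ hJ hlen
    simp only [List.foldl_nil, List.length_nil, Nat.add_zero]
    rw [Nat.div_eq_of_lt (by omega : J.length < p + 1)]
    omega
  | cons x I ih =>
    intro J c hI hJ hlen
    have hx := hI x (by simp)
    have hp' : (0:ℝ) < p := by positivity
    have hp1 : (0:ℝ) < (p:ℝ)+1 := by positivity
    rcases eq_or_lt_of_le hlen with hJp | hJp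
    · -- J.length = p : bin closes
      have hsum : (p:ℝ)/((p:ℝ)+1) ≤ J.sum := by
        have h1 : J.length • (1/((p:ℝ)+1)) ≤ J.sum :=
          List.card_nsmul_le_sum J (1/((p:ℝ)+1)) (fun y hy => le_of_lt (hJ y hy).1)
        rw [hJp, nsmul_eq_mul] at h1
        calc (p:ℝ)/((p:ℝ)+1) = p * (1/((p:ℝ)+1)) := by ring
          _ ≤ J.sum := h1
      have hclose : 1 ≤ J.sum + x := by
        have hx1 := hx.1
        have : (p:ℝ)/((p:ℝ)+1) + 1/((p:ℝ)+1) = 1 := by field_simp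
        linarith
      simp only [List.foldl_cons, dnfStep]
      rw [if_pos (by simpa using hclose)]
      have h0 : ((0:ℝ), c+1) = ((([]:List ℝ).sum), c+1) := by simp
      rw [h0, ih [] (c+1) (fun y hy => hI y (by simp [hy])) (by simp) (by simp)]
      have hnum : J.length + (x :: I).length = I.length + (p+1) := by
        simp [hJp]; omega
      rw [hnum, Nat.add_div_right _ (by omega)]
      simp; omega
    · -- J.length < p : bin stays open
      have hopen : J.sum + x < 1 := by
        have hxp := hx.2
        have hlc : (J.length:ℝ) + 1 ≤ (p:ℝ) := by exact_mod_cast hJp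
        have h1 : J.sum ≤ (J.length:ℝ) * (1/(p:ℝ)) := by
          have := List.sum_le_card_nsmul J (1/(p:ℝ)) (fun y hy => le_of_lt (hJ y hy).2)
          simpa [nsmul_eq_mul] using this
        have hinv : 0 < 1/(p:ℝ) := by positivity
        have : ((J.length:ℝ) + 1) * (1/(p:ℝ)) ≤ (p:ℝ) * (1/(p:ℝ)) :=
          mul_le_mul_of_nonneg_right hlc (le_of_lt hinv)
        have hpp : (p:ℝ) * (1/(p:ℝ)) = 1 := by field_simp
        nlinarith
      simp only [List.foldl_cons, dnfStep]
      rw [if_neg (by simpa using not_le.mpr hopen)]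
      have h0 : (J.sum + x, c) = ((J ++ [x]).sum, c) := by simp
      rw [h0, ih (J ++ [x]) c (fun y hy => hI y (by simp [hy]))
        (by intro y hy; rcases List.mem_append.1 hy with h | h
            · exact hJ y h
            · simp at h; subst h; exact hx) (by simp; omega)]
      congr 1
      congr 1
      simp; omega

lemma bin_weight (p : ℕ) (hp : 2 ≤ p) {ι : Type*} (T : Finset ι) (x : ι → ℝ)
    (hx : ∀ i ∈ T, 1/((p:ℝ)+1) < x i ∧ x i < 1/((p:ℝ)-1))
    (hcov : 1 ≤ ∑ i ∈ T, x i) :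
    p*p+1 ≤ (p+1) * (T.filter fun i => (1:ℝ)/p ≤ x i).card
      + p * (T.filter fun i => ¬((1:ℝ)/p ≤ x i)).card := by
  classical
  have hP : (2:ℝ) ≤ (p:ℝ) := by exact_mod_cast hp
  have hne : T.Nonempty := by
    rcases T.eq_empty_or_nonempty with h | h
    · exfalso; rw [h] at hcov; simp at hcov; linarith
    · exact h
  set cL := (T.filter fun i => (1:ℝ)/p ≤ x i).card with hcL
  set cS := (T.filter fun i => ¬((1:ℝ)/p ≤ x i)).card with hcS
  have hlt : (∑ i ∈ T, x i) < ∑ i ∈ T, (if (1:ℝ)/p ≤ x i then 1/((p:ℝ)-1) else 1/(p:ℝ)) := by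
    apply Finset.sum_lt_sum_of_nonempty hne
    intro i hi
    by_cases h : (1:ℝ)/p ≤ x i
    · rw [if_pos h]; exact (hx i hi).2
    · rw [if_neg h]; exact not_le.1 h
  rw [Finset.sum_ite, Finset.sum_const, Finset.sum_const, nsmul_eq_mul, nsmul_eq_mul,
    ← hcL, ← hcS] at hlt
  have hmain : (p:ℝ)*((p:ℝ)-1) < cL * p + cS * ((p:ℝ)-1) := by
    have h1 : 1 < (cL:ℝ) * (1/((p:ℝ)-1)) + cS * (1/(p:ℝ)) := lt_of_le_of_lt hcov hlt
    have hp0 : (0:ℝ) < p := by linarith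
    have hp1 : (0:ℝ) < (p:ℝ)-1 := by linarith
    have h2 := mul_lt_mul_of_pos_left h1 (mul_pos hp0 hp1)
    calc (p:ℝ)*((p:ℝ)-1) = (p:ℝ)*((p:ℝ)-1) * 1 := by ring
      _ < (p:ℝ)*((p:ℝ)-1) * ((cL:ℝ) * (1/((p:ℝ)-1)) + cS * (1/(p:ℝ))) := h2
      _ = cL * p + cS * ((p:ℝ)-1) := by field_simp
  obtain ⟨q, rfl⟩ : ∃ q, p = q + 2 := ⟨p - 2, by omega⟩
  have hnat : (q+2)*(q+1) < cL*(q+2) + cS*(q+1) := by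
    push_cast at hmain
    have h3 : ((q:ℝ)+2)*((q:ℝ)+1) < (cL:ℝ)*((q:ℝ)+2) + (cS:ℝ)*((q:ℝ)+1) := by linarith
    exact_mod_cast h3
  have hkey := natkey q cL cS hnat
  have h2 : (q+2+1)*cL + (q+2)*cS = cL*(q+3)+cS*(q+2) := by ring
  linarith

lemma opt_ub (p : ℕ) (hp : 2 ≤ p) (a b : ℝ) (haB : 1/((p:ℝ)+1) ≤ a) (hbB : b ≤ 1/((p:ℝ)-1))
    (I : List ℝ) (hI : ∀ x ∈ I, x ∈ Set.Ioo a b) :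
    optCount I ≤ ((p+1) * I.countP (fun x => decide ((1:ℝ)/p ≤ x))
      + p * I.countP (fun x => decide (x < (1:ℝ)/p))) / (p*p+1) := by
  unfold optCount
  apply Finset.sup_le
  intro f _
  rw [Nat.le_div_iff_mul_le (by omega)]
  have hL : ∑ bb : Fin I.length, ((Finset.univ.filter (fun i => f i = bb)).filter
      fun i => (1:ℝ)/p ≤ I.get i).card = I.countP (fun x => decide ((1:ℝ)/p ≤ x)) := by
    rw [countP_card]
    rw [show (Finset.univ.filter fun i : Fin I.length =>
        (decide ((1:ℝ)/p ≤ I.get i)) = true)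
      = (Finset.univ.filter fun i : Fin I.length => (1:ℝ)/p ≤ I.get i) from
      Finset.filter_congr (by intro i _; simp)]
    rw [Finset.card_eq_sum_card_fiberwise (f := f) (t := Finset.univ)
      (fun i _ => Finset.mem_univ _)]
    exact Finset.sum_congr rfl (fun bb _ => by rw [Finset.filter_comm])
  have hS : ∑ bb : Fin I.length, ((Finset.univ.filter (fun i => f i = bb)).filter
      fun i => ¬((1:ℝ)/p ≤ I.get i)).card = I.countP (fun x => decide (x < (1:ℝ)/p)) := by
    rw [countP_card]
    rw [show (Finset.univ.filter fun i : Fin I.length =>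
        (decide (I.get i < (1:ℝ)/p)) = true)
      = (Finset.univ.filter fun i : Fin I.length => ¬((1:ℝ)/p ≤ I.get i)) from
      Finset.filter_congr (by intro i _; simp [not_le])]
    rw [Finset.card_eq_sum_card_fiberwise (f := f) (t := Finset.univ)
      (fun i _ => Finset.mem_univ _)]
    exact Finset.sum_congr rfl (fun bb _ => by rw [Finset.filter_comm])
  rw [← smul_eq_mul, ← Finset.sum_const]
  refine le_trans (Finset.sum_le_sum (g := fun bb : Fin I.length =>
      (p+1) * ((Finset.univ.filter (fun i => f i = bb)).filter
          fun i => (1:ℝ)/p ≤ I.get i).card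
      + p * ((Finset.univ.filter (fun i => f i = bb)).filter
          fun i => ¬((1:ℝ)/p ≤ I.get i)).card) ?_)
    (le_trans (Finset.sum_le_sum_of_subset (Finset.filter_subset _ _)) (le_of_eq ?_))
  · intro bb hbb
    have hcov := (Finset.mem_filter.1 hbb).2
    refine bin_weight p hp _ _ ?_ hcov
    intro i _
    have hmem := hI (I.get i) (I.get_mem _)
    exact ⟨lt_of_le_of_lt haB hmem.1, lt_of_lt_of_le hmem.2 hbB⟩
  · rw [Finset.sum_add_distrib, ← Finset.mul_sum, ← Finset.mul_sum, hL, hS]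

lemma dh_eval (p k : ℕ) (hp : 2 ≤ p) (hk : p ≤ k) (a b : ℝ)
    (ha1 : 1/((p:ℝ)+1) ≤ a) (hbB : b ≤ 1/((p:ℝ)-1))
    (I : List ℝ) (hI : ∀ x ∈ I, x ∈ Set.Ioo a b) :
    dhCount k I = I.countP (fun x => decide ((1:ℝ)/p ≤ x)) / p
      + I.countP (fun x => decide (x < (1:ℝ)/p)) / (p+1) := by
  have hp0 : (0:ℝ) < p := by positivity
  have hP : (2:ℝ) ≤ (p:ℝ) := by exact_mod_cast hp
  have tP : I.countP (fun x => decide ((1:ℝ)/(p:ℝ) ≤ x ∧ x < 1/((p:ℝ)-1)))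
      = I.countP (fun x => decide ((1:ℝ)/p ≤ x)) := by
    apply List.countP_congr
    intro x hx
    simp only [decide_eq_true_eq]
    exact ⟨fun h => h.1, fun h => ⟨h, lt_of_lt_of_le (hI x hx).2 hbB⟩⟩
  have hzero : ∀ j, 2 ≤ j → j ≠ p → j ≠ p + 1 →
      I.countP (fun x => decide ((1:ℝ)/(j:ℝ) ≤ x ∧ x < 1/((j:ℝ)-1))) = 0 := by
    intro j hj2 hjp hjp1
    rw [List.countP_eq_zero]
    intro x hx
    simp only [decide_eq_true_eq, not_and, not_lt]
    have hxa : a < x := (hI x hx).1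
    have hxb : x < b := (hI x hx).2
    rcases lt_or_gt_of_ne hjp with hjlt | hjgt
    · -- j < p : 1/j ≥ 1/(p-1) ≥ b > x
      intro h1
      exfalso
      have hj1 : (j:ℝ) ≤ (p:ℝ) - 1 := by
        have : (j:ℝ) + 1 ≤ (p:ℝ) := by exact_mod_cast (by omega : j + 1 ≤ p)
        linarith
      have hjpos : (0:ℝ) < (j:ℝ) := by
        have : (0:ℕ) < j := by omega
        exact_mod_cast this
      have := one_div_le_one_div_of_le hjpos hj1
      linarith
    · -- j ≥ p+2 : 1/(j-1) ≤ 1/(p+1) ≤ a < x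
      intro _
      have hj1 : (p:ℝ) + 1 ≤ (j:ℝ) - 1 := by
        have : ((p:ℕ) + 2 : ℝ) ≤ (j:ℝ) := by exact_mod_cast (by omega : p + 2 ≤ j)
        push_cast at this
        linarith
      have := one_div_le_one_div_of_le (by linarith : (0:ℝ) < (p:ℝ)+1) hj1
      linarith
  rcases eq_or_lt_of_le hk with rfl | hkp
  · -- k = p
    unfold dhCount
    rw [Finset.sum_eq_single_of_mem p (Finset.mem_Icc.2 ⟨hp, le_refl p⟩)
      (fun j hj hne => by
        rw [hzero j (Finset.mem_Icc.1 hj).1 hne (by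
          have := (Finset.mem_Icc.1 hj).2; omega)]
        simp)]
    rw [tP]
    congr 1
    have hfil : ∀ x ∈ I.filter (fun x => decide (x < 1/(p:ℝ))),
        1/((p:ℝ)+1) < x ∧ x < 1/(p:ℝ) := by
      intro x hx
      rw [List.mem_filter] at hx
      have h2 := hx.2
      simp only [decide_eq_true_eq] at h2
      exact ⟨lt_of_le_of_lt ha1 (hI x hx.1).1, h2⟩
    unfold dnfCount
    have hrun := dnf_run p hp (I.filter (fun x => decide (x < 1/(p:ℝ)))) [] 0 hfil
      (by simp) (by simp)
    simp only [List.sum_nil, List.length_nil, Nat.zero_add] at hrun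
    rw [hrun, List.countP_eq_length_filter]
  · -- p < k
    unfold dhCount
    rw [← Finset.sum_subset
      (show ({p, p+1} : Finset ℕ) ⊆ Finset.Icc 2 k by
        intro j hj
        simp only [Finset.mem_insert, Finset.mem_singleton] at hj
        rw [Finset.mem_Icc]
        rcases hj with rfl | rfl <;> omega)
      (fun j hjIcc hjnot => by
        simp only [Finset.mem_insert, Finset.mem_singleton, not_or] at hjnot
        rw [hzero j (Finset.mem_Icc.1 hjIcc).1 hjnot.1 hjnot.2]
        simp)]
    rw [Finset.sum_pair (by omega : p ≠ p + 1), tP]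
    have tP1 : I.countP (fun x => decide ((1:ℝ)/((p+1:ℕ):ℝ) ≤ x ∧ x < 1/(((p+1:ℕ):ℝ)-1)))
        = I.countP (fun x => decide (x < (1:ℝ)/p)) := by
      apply List.countP_congr
      intro x hx
      simp only [decide_eq_true_eq]
      have hc : ((p+1:ℕ):ℝ) = (p:ℝ) + 1 := by push_cast; ring
      rw [hc]
      have ha' : 1/((p:ℝ)+1) < x := lt_of_le_of_lt ha1 (hI x hx).1
      constructor
      · intro h
        have : (p:ℝ) + 1 - 1 = (p:ℝ) := by ring
        rw [this] at h
        exact h.2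
      · intro h
        refine ⟨le_of_lt ha', ?_⟩
        have : (p:ℝ) + 1 - 1 = (p:ℝ) := by ring
        rw [this]
        exact h
    rw [tP1]
    have hnil : I.filter (fun x => decide (x < 1/(k:ℝ))) = [] := by
      rw [List.filter_eq_nil_iff]
      intro x hx
      simp only [decide_eq_true_eq, not_lt]
      have hk1 : (p:ℝ) + 1 ≤ (k:ℝ) := by exact_mod_cast (by omega : p + 1 ≤ k)
      calc 1/(k:ℝ) ≤ 1/((p:ℝ)+1) :=
            one_div_le_one_div_of_le (by linarith : (0:ℝ) < (p:ℝ)+1) hk1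
        _ ≤ a := ha1
        _ ≤ x := le_of_lt (hI x hx).1
    rw [hnil]
    simp [dnfCount]

noncomputable def packf (m q N : ℕ) (hN : N = m + m * (q+1)) (i : Fin N) : Fin N :=
  if h : (i:ℕ) < m then i else
    ⟨((i:ℕ) - m)/(q+1), by
      have hi : (i:ℕ) < m + m * (q+1) := lt_of_lt_of_le i.2 (le_of_eq hN)
      have h1 : (i:ℕ) - m < m * (q+1) := by omega
      have h2 : ((i:ℕ) - m)/(q+1) < m :=
        Nat.div_lt_of_lt_mul (by rwa [mul_comm] at h1)
      have h3 : ((i:ℕ) - m)/(q+1) < m + m * (q+1) :=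
        lt_of_lt_of_le h2 (Nat.le_add_right _ _)
      exact lt_of_lt_of_le h3 (le_of_eq hN.symm)⟩

lemma opt_lb_s3 (m q : ℕ) (L s : ℝ) (hs0 : 0 ≤ s) (hL0 : 0 ≤ L)
    (hcov : 1 ≤ L + ((q:ℝ)+1) * s) :
    m ≤ optCount (List.replicate m L ++ List.replicate (m*(q+1)) s) := by
  have hq1 : 0 < q + 1 := Nat.succ_pos q
  have hNlen : (List.replicate m L ++ List.replicate (m*(q+1)) s).length = m + m*(q+1) := by
    simp
  have hgetL : ∀ i : Fin (List.replicate m L ++ List.replicate (m*(q+1)) s).length,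
      (i:ℕ) < m → (List.replicate m L ++ List.replicate (m*(q+1)) s).get i = L := by
    intro i hi
    rw [List.get_eq_getElem, List.getElem_append_left (by simpa using hi)]
    exact List.getElem_replicate _
  have hgetS : ∀ i : Fin (List.replicate m L ++ List.replicate (m*(q+1)) s).length,
      m ≤ (i:ℕ) → (List.replicate m L ++ List.replicate (m*(q+1)) s).get i = s := by
    intro i hi
    rw [List.get_eq_getElem, List.getElem_append_right (by simpa using hi)]
    exact List.getElem_replicate _
  unfold optCount
  refine le_trans ?_ (Finset.le_sup (Finset.mem_univ (packf m q _ hNlen)))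
  have hcard : (Finset.univ : Finset (Fin m)).card = m := by simp
  refine le_trans (le_of_eq hcard.symm) (Finset.card_le_card_of_injOn (fun r : Fin m =>
    (⟨(r:ℕ), by rw [hNlen]; exact lt_of_lt_of_le r.2 (Nat.le_add_right _ _)⟩ : Fin _)) ?_ ?_)
  · -- maps to covered bins
    intro r _
    rw [Finset.mem_coe, Finset.mem_filter]
    refine ⟨Finset.mem_univ _, ?_⟩
    have hidx2 : ∀ t : {x // x ∈ Finset.range (q+1)},
        m + (r:ℕ)*(q+1) + t.1 < (List.replicate m L ++ List.replicate (m*(q+1)) s).length := by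
      intro t
      have ht := Finset.mem_range.1 t.2
      have h1 : (r:ℕ)*(q+1) + t.1 < ((r:ℕ)+1)*(q+1) := by rw [Nat.succ_mul]; omega
      have h2 : ((r:ℕ)+1)*(q+1) ≤ m*(q+1) := Nat.mul_le_mul_right _ r.2
      rw [hNlen]
      have := r.2
      linarith
    set rIdx : Fin (List.replicate m L ++ List.replicate (m*(q+1)) s).length :=
      ⟨(r:ℕ), by rw [hNlen]; exact lt_of_lt_of_le r.2 (Nat.le_add_right _ _)⟩ with hrIdx
    set T := insert rIdx ((Finset.range (q+1)).attach.image
      (fun t => (⟨m + (r:ℕ)*(q+1) + t.1, hidx2 t⟩ :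
        Fin (List.replicate m L ++ List.replicate (m*(q+1)) s).length))) with hT
    have hnm : rIdx ∉ (Finset.range (q+1)).attach.image
        (fun t => (⟨m + (r:ℕ)*(q+1) + t.1, hidx2 t⟩ :
          Fin (List.replicate m L ++ List.replicate (m*(q+1)) s).length)) := by
      intro h
      obtain ⟨t, _, heq⟩ := Finset.mem_image.1 h
      have hv := congrArg Fin.val heq
      simp only [hrIdx] at hv
      have := r.2
      omega
    have hTsub : T ⊆ Finset.univ.filter
        (fun i => packf m q _ hNlen i = rIdx) := by
      intro i hi
      rw [Finset.mem_filter]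
      refine ⟨Finset.mem_univ _, ?_⟩
      rcases Finset.mem_insert.1 hi with rfl | himg
      · unfold packf
        rw [dif_pos (show ((rIdx):ℕ) < m from r.2)]
      · obtain ⟨t, _, rfl⟩ := Finset.mem_image.1 himg
        unfold packf
        rw [dif_neg (by
          simp only [not_lt]
          exact (Nat.le_add_right _ _).trans (Nat.le_add_right _ _))]
        apply Fin.ext
        simp only [hrIdx]
        have ht := Finset.mem_range.1 t.2
        have harith : m + (r:ℕ)*(q+1) + t.1 - m = t.1 + (r:ℕ)*(q+1) := by omega
        rw [harith, Nat.add_mul_div_right _ _ hq1, Nat.div_eq_of_lt ht]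
        simp
    have hTsum : 1 ≤ ∑ i ∈ T, (List.replicate m L ++ List.replicate (m*(q+1)) s).get i := by
      rw [hT, Finset.sum_insert hnm, Finset.sum_image (by
        intro x _ y _ hxy
        have := congrArg Fin.val hxy
        simp only [] at this
        exact Subtype.ext (by omega))]
      rw [Finset.sum_congr rfl (fun t _ => hgetS _ (by
        exact (Nat.le_add_right _ _).trans (Nat.le_add_right _ _)))]
      rw [Finset.sum_const, hgetL rIdx r.2, Finset.card_attach, Finset.card_range,
        nsmul_eq_mul]
      push_cast
      linarith
    refine le_trans hTsum (Finset.sum_le_sum_of_subset_of_nonneg hTsub ?_)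
    intro i _ _
    rcases Nat.lt_or_ge (i:ℕ) m with h | h
    · rw [hgetL i h]; exact hL0
    · rw [hgetS i h]; exact hs0
  · intro x _ y _ hxy
    have := congrArg Fin.val hxy
    exact Fin.ext (by simpa using this)

/-- If `(a,b) ⊆ (0,1)` with `1/(p+1) ≤ a < 1/p < b`, `1/p` the only point of the
form `1/l` (integer `l ≥ 2`) in `(a,b)`, and `k ≥ p`, then the competitive ratio
of `DH_k` restricted to item sizes in `(a,b)` equals `(p²+1)/(p(p+1))`. -/
theorem dh_restricted_CR_eq (p k : ℕ) (hp : 2 ≤ p) (hk : p ≤ k) (a b : ℝ)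
    (hsub : Set.Ioo a b ⊆ Set.Ioo (0:ℝ) 1)
    (ha1 : 1/((p:ℝ)+1) ≤ a) (ha2 : a < 1/(p:ℝ)) (hb : 1/(p:ℝ) < b)
    (honly : ∀ l : ℕ, 2 ≤ l → (1/(l:ℝ)) ∈ Set.Ioo a b → l = p) :
    CRrestricted (Set.Ioo a b) (dhCount k) = ((p:ℝ)^2+1)/((p:ℝ)*((p:ℝ)+1)) := by
  have hP : (2:ℝ) ≤ (p:ℝ) := by exact_mod_cast hp
  have hp0 : (0:ℝ) < p := by linarith
  set cstar : ℝ := ((p:ℝ)^2+1)/((p:ℝ)*((p:ℝ)+1)) with hcstar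
  have hcpos : 0 < cstar := div_pos (by positivity) (by nlinarith)
  have hbB : b ≤ 1/((p:ℝ)-1) := by
    by_contra hcon
    push_neg at hcon
    rcases eq_or_lt_of_le hp with hp2 | hp3
    · have hpr : (p:ℝ) = 2 := by exact_mod_cast hp2.symm
      rw [hpr] at hcon hb
      norm_num at hcon hb
      have hx : ((1+b)/2) ∈ Set.Ioo a b := ⟨by rw [hpr] at ha2; linarith, by linarith⟩
      have := (hsub hx).2
      linarith
    · have h2 : 2 ≤ p - 1 := by omega
      have hcast : ((p-1:ℕ):ℝ) = (p:ℝ)-1 := by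
        push_cast [Nat.cast_sub (by omega : 1 ≤ p)]
        ring
      have hmem : 1/((p-1:ℕ):ℝ) ∈ Set.Ioo a b := by
        rw [hcast]
        constructor
        · have h3 : 1/(p:ℝ) < 1/((p:ℝ)-1) :=
            one_div_lt_one_div_of_lt (by linarith) (by linarith)
          linarith
        · exact hcon
      have := honly (p-1) h2 hmem
      omega
  have hmemS : ∃ β : ℝ, ∀ I : List ℝ, (∀ x ∈ I, x ∈ Set.Ioo a b) →
      cstar * (optCount I : ℝ) + β ≤ (dhCount k I : ℝ) := by
    refine ⟨-2, fun I hI => ?_⟩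
    have hdh := dh_eval p k hp hk a b ha1 hbB I hI
    have hopt := opt_ub p hp a b ha1 hbB I hI
    set nL := I.countP (fun x => decide ((1:ℝ)/p ≤ x)) with hnL
    set nS := I.countP (fun x => decide (x < (1:ℝ)/p)) with hnS
    have h1 : (optCount I : ℝ) ≤ ((((p+1) * nL + p * nS) : ℕ) : ℝ) / ((p*p+1 : ℕ) : ℝ) :=
      le_trans (Nat.cast_le.2 hopt) Nat.cast_div_le
    have h4 := nat_div_cast_ge nL p (by omega)
    have h5 := nat_div_cast_ge nS (p+1) (by omega)
    rw [hdh]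
    push_cast at h1 ⊢
    have hc2 : cstar * ((((p:ℝ)+1) * nL + (p:ℝ) * nS) / ((p:ℝ)*(p:ℝ)+1))
        = (nL:ℝ)/(p:ℝ) + (nS:ℝ)/((p:ℝ)+1) := by
      rw [hcstar]; field_simp
    have hmul := mul_le_mul_of_nonneg_left h1 (le_of_lt hcpos)
    push_cast at h4 h5
    linarith
  have hub : ∀ c ∈ {c : ℝ | ∃ β : ℝ, ∀ I : List ℝ, (∀ x ∈ I, x ∈ Set.Ioo a b) →
      c * (optCount I : ℝ) + β ≤ (dhCount k I : ℝ)}, c ≤ cstar := by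
    rintro c ⟨β, hβ⟩
    by_contra hc
    push_neg at hc
    have ha0 : (0:ℝ) < a := lt_of_lt_of_le (by positivity) ha1
    set L : ℝ := (1/(p:ℝ) + b)/2 with hLdef
    have hL1 : 1/(p:ℝ) < L := by rw [hLdef]; linarith
    have hL2 : L < b := by rw [hLdef]; linarith
    have hpm1 : (0:ℝ) < (p:ℝ) - 1 := by linarith
    have hs0lt : max a ((1 - L)/((p:ℝ)-1)) < 1/(p:ℝ) := by
      apply max_lt ha2
      rw [div_lt_iff₀ hpm1]
      have heq : 1/(p:ℝ) * ((p:ℝ)-1) = 1 - 1/(p:ℝ) := by field_simp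
      rw [heq]
      linarith
    set s : ℝ := (max a ((1 - L)/((p:ℝ)-1)) + 1/(p:ℝ))/2 with hsdef
    have hsa : a < s := by
      rw [hsdef]
      have h1 := le_max_left a ((1 - L)/((p:ℝ)-1))
      linarith
    have hss : s < 1/(p:ℝ) := by rw [hsdef]; linarith
    have hs0 : 0 < s := lt_trans ha0 hsa
    have hcover : 1 ≤ L + ((p:ℝ)-1) * s := by
      have h1 := le_max_right a ((1 - L)/((p:ℝ)-1))
      have h2 : (1 - L)/((p:ℝ)-1) < s := by rw [hsdef]; linarith
      rw [div_lt_iff₀ hpm1] at h2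
      nlinarith
    have hM : ∀ m : ℕ, c * m + β ≤ cstar * m := by
      intro m
      obtain ⟨q, hq⟩ : ∃ q, p = q + 2 := ⟨p-2, by omega⟩
      set Im := List.replicate m L ++ List.replicate (m*(p-1)) s with hImdef
      have hIm : ∀ x ∈ Im, x ∈ Set.Ioo a b := by
        intro x hx
        rw [hImdef, List.mem_append] at hx
        rcases hx with hx | hx
        · rw [List.eq_of_mem_replicate hx]; exact ⟨lt_trans ha2 hL1, hL2⟩
        · rw [List.eq_of_mem_replicate hx]; exact ⟨hsa, lt_trans hss hb⟩
      have hopt1 : m ≤ optCount Im := by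
        rw [hImdef]
        have hmm : m*(p-1) = m*(q+1) := by congr 1; omega
        rw [hmm]
        apply opt_lb_s3 m q L s (le_of_lt hs0) (by linarith : (0:ℝ) ≤ L)
        have hqc : ((q:ℝ)+1) = (p:ℝ)-1 := by
          have hpq : (p:ℝ) = (q:ℝ)+2 := by exact_mod_cast hq
          linarith
        rw [hqc]
        exact hcover
      have hdh := dh_eval p k hp hk a b ha1 hbB Im hIm
      have hcL : Im.countP (fun x => decide ((1:ℝ)/p ≤ x)) = m := by
        rw [hImdef, List.countP_append, List.countP_replicate, List.countP_replicate,
          if_pos (decide_eq_true (le_of_lt hL1)),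
          if_neg (by simp only [decide_eq_true_eq]; exact not_le.2 hss)]
        exact Nat.add_zero _
      have hcS : Im.countP (fun x => decide (x < (1:ℝ)/p)) = m*(p-1) := by
        rw [hImdef, List.countP_append, List.countP_replicate, List.countP_replicate,
          if_neg (by simp only [decide_eq_true_eq]; exact not_lt.2 (le_of_lt hL1)),
          if_pos (decide_eq_true hss)]
        exact Nat.zero_add _
      rw [hcL, hcS] at hdh
      have hd1 : ((m/p : ℕ):ℝ) ≤ (m:ℝ)/(p:ℝ) := Nat.cast_div_le
      have hd2 : (((m*(p-1))/(p+1) : ℕ):ℝ) ≤ ((m*(p-1) : ℕ):ℝ)/((p+1:ℕ):ℝ) :=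
        Nat.cast_div_le
      have hd3 : ((m*(p-1) : ℕ):ℝ) = (m:ℝ) * ((p:ℝ)-1) := by
        push_cast [Nat.cast_sub (by omega : 1 ≤ p)]; ring
      have hkey : (dhCount k Im : ℝ) ≤ m * cstar := by
        rw [hdh]
        push_cast
        rw [hd3] at hd2
        push_cast at hd2
        have hceq : (m:ℝ)/(p:ℝ) + (m:ℝ)*((p:ℝ)-1)/((p:ℝ)+1) = (m:ℝ) * cstar := by
          rw [hcstar]; field_simp; ring
        linarith
      have h5 := hβ Im hIm
      have h6 : c * (m:ℝ) ≤ c * (optCount Im : ℝ) :=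
        mul_le_mul_of_nonneg_left (by exact_mod_cast hopt1) (le_of_lt (lt_trans hcpos hc))
      linarith
    have h7 := hM (⌈(1 - β)/(c - cstar)⌉₊)
    have h8 : (1 - β)/(c - cstar) ≤ ((⌈(1 - β)/(c - cstar)⌉₊ : ℕ):ℝ) := Nat.le_ceil _
    have h9 : 1 - β ≤ ((⌈(1 - β)/(c - cstar)⌉₊ : ℕ):ℝ) * (c - cstar) := by
      rw [div_le_iff₀ (by linarith : (0:ℝ) < c - cstar)] at h8
      linarith
    nlinarith
  unfold CRrestricted
  apply le_antisymm
  · exact csSup_le ⟨cstar, hmemS⟩ hub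
  · exact le_csSup ⟨cstar, hub⟩ hmemS
end

section
/- For every integer k ≥ 2 and every input sequence I, DH_k,W(I) ≥ DNF_W(I) − (k − 1). -/
open Filter MeasureTheory

open Filter MeasureTheory

noncomputable def dnfC (a : ℝ) (L : List ℝ) : ℕ := (L.foldl dnfStep (a, 0)).2
noncomputable def dnfL (a : ℝ) (L : List ℝ) : ℝ := (L.foldl dnfStep (a, 0)).1

lemma dnfStep_def (a : ℝ) (c : ℕ) (x : ℝ) :
    dnfStep (a, c) x = if 1 ≤ a + x then (0, c + 1) else (a + x, c) := rfl

lemma foldl_dnf (L : List ℝ) : ∀ a : ℝ, ∀ c : ℕ,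
    L.foldl dnfStep (a, c)
      = ((L.foldl dnfStep (a, 0)).1, c + (L.foldl dnfStep (a, 0)).2) := by
  induction L with
  | nil => intro a c; simp
  | cons x L ih =>
    intro a c
    simp only [List.foldl_cons, dnfStep_def]
    by_cases h : 1 ≤ a + x
    · rw [if_pos h, if_pos h, ih 0 (c+1), ih 0 (0+1)]
      exact congrArg (Prod.mk _) (by omega)
    · rw [if_neg h, if_neg h, ih (a+x) c]

lemma dnfC_cons (a x : ℝ) (L : List ℝ) :
    dnfC a (x :: L) = if 1 ≤ a + x then 1 + dnfC 0 L else dnfC (a+x) L := by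
  unfold dnfC
  rw [List.foldl_cons, dnfStep_def]
  by_cases h : 1 ≤ a + x
  · rw [if_pos h, if_pos h, foldl_dnf]
  · rw [if_neg h, if_neg h]

lemma dnfL_cons (a x : ℝ) (L : List ℝ) :
    dnfL a (x :: L) = if 1 ≤ a + x then dnfL 0 L else dnfL (a+x) L := by
  unfold dnfL
  rw [List.foldl_cons, dnfStep_def]
  by_cases h : 1 ≤ a + x
  · rw [if_pos h, if_pos h, foldl_dnf]
  · rw [if_neg h, if_neg h]

lemma dnfC_append (a : ℝ) (A B : List ℝ) :
    dnfC a (A ++ B) = dnfC a A + dnfC (dnfL a A) B := by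
  unfold dnfC dnfL
  rw [List.foldl_append, foldl_dnf A a 0, foldl_dnf B]

lemma dnfL_nonneg (L : List ℝ) : ∀ a : ℝ, (∀ x ∈ L, 0 ≤ x) → 0 ≤ a → 0 ≤ dnfL a L := by
  induction L with
  | nil => intro a _ ha; simpa [dnfL] using ha
  | cons x L ih =>
    intro a hL ha
    rw [dnfL_cons]
    by_cases h : 1 ≤ a + x
    · simp only [if_pos h]; exact ih 0 (fun y hy => hL y (by simp [hy])) le_rfl
    · simp only [if_neg h]
      exact ih (a+x) (fun y hy => hL y (by simp [hy]))
        (add_nonneg ha (hL x (by simp)))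

lemma dnfL_lt_one (L : List ℝ) : ∀ a : ℝ, a < 1 → dnfL a L < 1 := by
  induction L with
  | nil => intro a ha; simpa [dnfL] using ha
  | cons x L ih =>
    intro a ha
    rw [dnfL_cons]
    by_cases h : 1 ≤ a + x
    · simp only [if_pos h]; exact ih 0 one_pos
    · simp only [if_neg h]; exact ih (a+x) (lt_of_not_ge h)

lemma dnfC_sandwich (L : List ℝ) : ∀ a b : ℝ, (∀ x ∈ L, 0 ≤ x) → 0 ≤ b → b ≤ a →
    dnfC b L ≤ dnfC a L ∧ dnfC a L ≤ dnfC b L + 1 := by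
  induction L with
  | nil => intro a b _ _ _; simp [dnfC]
  | cons x L ih =>
    intro a b hL hb hba
    have hx : 0 ≤ x := hL x (by simp)
    have hL' : ∀ y ∈ L, 0 ≤ y := fun y hy => hL y (by simp [hy])
    rw [dnfC_cons, dnfC_cons]
    by_cases hbx : 1 ≤ b + x
    · have hax : 1 ≤ a + x := le_trans hbx (by linarith)
      simp [hbx, hax]
    · by_cases hax : 1 ≤ a + x
      · simp only [if_pos hax, if_neg hbx]
        have := ih (b+x) 0 hL' le_rfl (by linarith)
        omega
      · simp only [if_neg hax, if_neg hbx]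
        exact ih (a+x) (b+x) hL' (by linarith) (by linarith)

lemma block_bound (m : ℕ) (hm : 2 ≤ m) (L : List ℝ)
    (hL : ∀ x ∈ L, 1/(m:ℝ) ≤ x ∧ x < 1/((m:ℝ)-1)) :
    ∀ a : ℝ, ∀ c : ℕ, 0 ≤ a → (((m:ℝ)-1) * a < c ∨ (a = 0 ∧ c = 0)) →
    m * dnfC a L ≤ L.length + c := by
  have hm1 : (1:ℝ) ≤ (m:ℝ) - 1 := by
    have : (2:ℝ) ≤ m := by exact_mod_cast hm
    linarith
  induction L with
  | nil => intro a c _ _; simp [dnfC]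
  | cons x L ih =>
    intro a c ha hinv
    have hx := hL x (by simp)
    have hL' : ∀ y ∈ L, 1/(m:ℝ) ≤ y ∧ y < 1/((m:ℝ)-1) := fun y hy => hL y (by simp [hy])
    have hx1 : x < 1 := lt_of_lt_of_le hx.2 (by
      rw [div_le_one (by linarith)]; linarith)
    have hxpos : 0 < x := lt_of_lt_of_le (by positivity) hx.1
    rw [dnfC_cons]
    by_cases h : 1 ≤ a + x
    · simp only [if_pos h]
      have hcn : m ≤ c + 1 := by
        rcases hinv with hinv | ⟨ha0, hc0⟩
        · have hagt : 1 - 1/((m:ℝ)-1) < a := by linarith [hx.2]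
          have h2 : ((m:ℝ)-1) * (1 - 1/((m:ℝ)-1)) ≤ ((m:ℝ)-1) * a :=
            mul_le_mul_of_nonneg_left hagt.le (by linarith)
          have hexp : ((m:ℝ)-1) * (1 - 1/((m:ℝ)-1)) = (m:ℝ) - 2 := by
            field_simp; ring
          have : (m:ℝ) < (c:ℝ) + 2 := by linarith
          have : m < c + 2 := by exact_mod_cast this
          omega
        · exfalso; rw [ha0] at h; simp at h; linarith
      have h0' : m * dnfC 0 L ≤ L.length := by
        simpa using ih hL' 0 0 le_rfl (Or.inr ⟨rfl, rfl⟩)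
      have heq : m * (1 + dnfC 0 L) = m + m * dnfC 0 L := by ring
      rw [heq, List.length_cons]
      exact le_trans (Nat.add_le_add hcn h0') (by omega)
    · simp only [if_neg h]
      have hinv' : ((m:ℝ)-1) * (a + x) < ((c + 1 : ℕ) : ℝ) := by
        have h1 : ((m:ℝ)-1) * a ≤ c := by
          rcases hinv with hinv | ⟨ha0, hc0⟩
          · exact hinv.le
          · simp [ha0, hc0]
        have h2 : ((m:ℝ)-1) * x < 1 := by
          have h3 : ((m:ℝ)-1) * x < ((m:ℝ)-1) * (1/((m:ℝ)-1)) :=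
            mul_lt_mul_of_pos_left hx.2 (by linarith)
          have h4 : ((m:ℝ)-1) * (1/((m:ℝ)-1)) = 1 := by field_simp
          linarith
        push_cast
        nlinarith
      have := ih hL' (a + x) (c + 1) (by linarith) (Or.inl hinv')
      rw [List.length_cons]
      exact le_trans this (by omega)

lemma block_bound0 (m : ℕ) (hm : 2 ≤ m) (L : List ℝ)
    (hL : ∀ x ∈ L, 1/(m:ℝ) ≤ x ∧ x < 1/((m:ℝ)-1)) :
    dnfC 0 L ≤ L.length / m := by
  rw [Nat.le_div_iff_mul_le (by omega)]
  rw [Nat.mul_comm]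
  simpa using block_bound m hm L hL 0 0 le_rfl (Or.inr ⟨rfl, rfl⟩)

lemma block_bound1 (m : ℕ) (hm : 2 ≤ m) (L : List ℝ)
    (hL : ∀ x ∈ L, 1/(m:ℝ) ≤ x ∧ x < 1/((m:ℝ)-1))
    (a : ℝ) (ha : 0 ≤ a) (ha1 : a < 1) :
    dnfC a L ≤ L.length / m + 1 := by
  rcases eq_or_lt_of_le ha with ha0 | ha0
  · exact le_trans (ha0 ▸ block_bound0 m hm L hL) (Nat.le_succ _)
  · have hm1 : (1:ℝ) ≤ (m:ℝ) - 1 := by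
      have : (2:ℝ) ≤ m := by exact_mod_cast hm
      linarith
    have hinv : ((m:ℝ)-1) * a < ((m - 1 : ℕ) : ℝ) := by
      have hc : ((m - 1 : ℕ) : ℝ) = (m:ℝ) - 1 := by
        push_cast [Nat.cast_sub (by omega : 1 ≤ m)]; ring
      rw [hc]
      nlinarith
    have hb := block_bound m hm L hL a (m-1) ha (Or.inl hinv)
    have h1 : dnfC a L ≤ (L.length + (m-1)) / m := by
      rw [Nat.le_div_iff_mul_le (by omega), Nat.mul_comm]
      exact hb
    calc dnfC a L ≤ (L.length + (m-1)) / m := h1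
      _ ≤ (L.length + m) / m := Nat.div_le_div_right (by omega)
      _ = L.length / m + 1 := Nat.add_div_right _ (by omega)

/-- Reorder: blocks of items in `[1/m, 1/(m-1))`, `[1/(m+1), 1/m)`, …, then the rest. -/
noncomputable def tauL : ℕ → ℕ → List ℝ → List ℝ
  | 0, _, J => J
  | (f+1), m, J =>
      (J.filter fun x => decide ((1:ℝ)/(m:ℝ) ≤ x))
        ++ tauL f (m+1) (J.filter fun x => decide (x < (1:ℝ)/(m:ℝ)))

lemma tauL_perm : ∀ (f m : ℕ) (J : List ℝ), (tauL f m J).Perm J := by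
  intro f
  induction f with
  | zero => intro m J; simp [tauL]
  | succ f ih =>
    intro m J
    rw [tauL]
    have h1 : (tauL f (m+1) (J.filter fun x => decide (x < (1:ℝ)/(m:ℝ)))).Perm
        (J.filter fun x => decide (x < (1:ℝ)/(m:ℝ))) := ih _ _
    refine ((h1.append_left _).trans ?_)
    have h2 : (J.filter fun x => decide (x < (1:ℝ)/(m:ℝ)))
        = J.filter fun x => !(decide ((1:ℝ)/(m:ℝ) ≤ x)) := by
      apply List.filter_congr
      intro x _
      rw [← decide_not]
      simp [not_le]
    rw [h2]
    exact List.filter_append_perm _ J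

set_option maxRecDepth 4000 in
lemma tau_bound (f : ℕ) : ∀ (m : ℕ) (J : List ℝ) (a : ℝ), 2 ≤ m →
    (∀ x ∈ J, 0 ≤ x ∧ x < 1/((m:ℝ)-1)) → 0 ≤ a → a < 1 →
    dnfC a (tauL f m J) ≤
      (∑ i ∈ Finset.range f,
        (J.countP fun x => decide ((1:ℝ)/((m+i:ℕ):ℝ) ≤ x ∧ x < 1/(((m+i:ℕ):ℝ) - 1))) / (m+i))
      + dnfC 0 (J.filter fun x => decide (x < 1/((m + f - 1 : ℕ):ℝ)))
      + f + (if a = 0 then 0 else 1) := by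
  induction f with
  | zero =>
    intro m J a hm hJ ha ha1
    have hmm : ((m - 1 : ℕ):ℝ) = (m:ℝ) - 1 := by
      push_cast [Nat.cast_sub (by omega : 1 ≤ m)]; ring
    have hfil : (J.filter fun x => decide (x < 1/((m + 0 - 1 : ℕ):ℝ))) = J := by
      rw [List.filter_eq_self]
      intro x hx
      simp only [decide_eq_true_iff]
      have h2 := (hJ x hx).2
      have h3 : m + 0 - 1 = m - 1 := by omega
      rw [h3, hmm]
      exact h2
    simp only [tauL, Finset.range_zero, Finset.sum_empty, hfil]
    by_cases h : a = 0
    · subst h; simp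
    · simp only [if_neg h]
      have := (dnfC_sandwich J a 0 (fun x hx => (hJ x hx).1) le_rfl ha).2
      omega
  | succ f ih =>
    intro m J a hm hJ ha ha1
    have hm0 : (0:ℝ) < (m:ℝ) := by
      have : (2:ℝ) ≤ (m:ℝ) := by exact_mod_cast hm
      linarith
    set p : ℝ → Bool := fun x => decide ((1:ℝ)/(m:ℝ) ≤ x) with hp
    set q : ℝ → Bool := fun x => decide (x < (1:ℝ)/(m:ℝ)) with hq
    have hunfold : tauL (f+1) m J = J.filter p ++ tauL f (m+1) (J.filter q) := rfl
    rw [hunfold, dnfC_append]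
    have hBmem : ∀ x ∈ J.filter p, 1/(m:ℝ) ≤ x ∧ x < 1/((m:ℝ)-1) := by
      intro x hx
      rw [List.mem_filter] at hx
      refine ⟨?_, (hJ x hx.1).2⟩
      have := of_decide_eq_true hx.2
      exact this
    have hJ' : ∀ x ∈ J.filter q, 0 ≤ x ∧ x < 1/(((m+1:ℕ):ℝ)-1) := by
      intro x hx
      rw [List.mem_filter] at hx
      refine ⟨(hJ x hx.1).1, ?_⟩
      have h := of_decide_eq_true hx.2
      have hc : ((m+1:ℕ):ℝ) - 1 = (m:ℝ) := by push_cast; ring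
      rw [hc]; exact h
    have hr0 : 0 ≤ dnfL a (J.filter p) :=
      dnfL_nonneg _ a (fun x hx => le_trans (by positivity) (hBmem x hx).1) ha
    have hr1 : dnfL a (J.filter p) < 1 := dnfL_lt_one _ a ha1
    have h1 : dnfC a (J.filter p) ≤ (J.filter p).length / m + (if a = 0 then 0 else 1) := by
      by_cases h : a = 0
      · subst h
        simp only [if_pos rfl, Nat.add_zero]
        exact block_bound0 m hm _ hBmem
      · simp only [if_neg h]
        exact block_bound1 m hm _ hBmem a ha ha1
    have h2 := ih (m+1) (J.filter q) (dnfL a (J.filter p)) (by omega) hJ' hr0 hr1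
    -- rewrite the countP terms and the rest-filter in h2
    have hcnt : ∀ i : ℕ,
        ((J.filter q).countP fun x =>
          decide ((1:ℝ)/((m+1+i:ℕ):ℝ) ≤ x ∧ x < 1/(((m+1+i:ℕ):ℝ) - 1)))
        = J.countP fun x =>
          decide ((1:ℝ)/((m+1+i:ℕ):ℝ) ≤ x ∧ x < 1/(((m+1+i:ℕ):ℝ) - 1)) := by
      intro i
      rw [List.countP_filter]
      apply List.countP_congr
      intro x hx
      simp only [Bool.and_eq_true, decide_eq_true_iff, hq]
      constructor
      · rintro ⟨h, _⟩; exact h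
      · intro hcl
        refine ⟨hcl, ?_⟩
        have hle : 1/(((m+1+i:ℕ):ℝ) - 1) ≤ 1/(m:ℝ) := by
          apply one_div_le_one_div_of_le hm0
          push_cast
          have : (0:ℝ) ≤ (i:ℝ) := Nat.cast_nonneg i
          linarith
        exact lt_of_lt_of_le hcl.2 hle
    have hidx : m + 1 + f - 1 = m + f := by omega
    have hidx2 : m + (f+1) - 1 = m + f := by omega
    have hrest : ((J.filter q).filter fun x => decide (x < 1/((m + f : ℕ):ℝ)))
        = J.filter fun x => decide (x < 1/((m + f : ℕ):ℝ)) := by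
      rw [List.filter_filter]
      apply List.filter_congr
      intro x hx
      by_cases h : x < 1/((m + f : ℕ):ℝ)
      · have hqx : q x = true := by
          simp only [hq, decide_eq_true_iff]
          refine lt_of_lt_of_le h ?_
          apply one_div_le_one_div_of_le hm0
          push_cast
          have : (0:ℝ) ≤ (f:ℝ) := Nat.cast_nonneg f
          linarith
        simp [h, hqx]
      · rw [decide_eq_false h]
        simp
    rw [hidx, hrest] at h2
    have h2' : dnfC (dnfL a (J.filter p)) (tauL f (m+1) (J.filter q)) ≤
        (∑ i ∈ Finset.range f,
          (J.countP fun x =>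
            decide ((1:ℝ)/((m+1+i:ℕ):ℝ) ≤ x ∧ x < 1/(((m+1+i:ℕ):ℝ) - 1))) / (m+1+i))
        + dnfC 0 (J.filter fun x => decide (x < 1/((m + f : ℕ):ℝ))) + f + 1 := by
      refine le_trans h2 ?_
      simp only [hcnt]
      gcongr
      split <;> omega
    -- now rewrite the goal's sum
    rw [Finset.sum_range_succ']
    have hsum : (∑ i ∈ Finset.range f,
          (J.countP fun x =>
            decide ((1:ℝ)/((m+(i+1):ℕ):ℝ) ≤ x ∧ x < 1/(((m+(i+1):ℕ):ℝ) - 1))) / (m+(i+1)))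
        = ∑ i ∈ Finset.range f,
          (J.countP fun x =>
            decide ((1:ℝ)/((m+1+i:ℕ):ℝ) ≤ x ∧ x < 1/(((m+1+i:ℕ):ℝ) - 1))) / (m+1+i) := by
      refine Finset.sum_congr rfl (fun i _ => ?_)
      have hi : m + (i+1) = m+1+i := by omega
      rw [hi]
    rw [hsum]
    simp only [hidx2, Nat.add_zero]
    have hg0 : (J.countP fun x => decide ((1:ℝ)/((m:ℕ):ℝ) ≤ x ∧ x < 1/(((m:ℕ):ℝ) - 1)))
        = (J.filter p).length := by
      rw [List.countP_eq_length_filter]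
      congr 1
      apply List.filter_congr
      intro x hx
      simp only [hp]
      rw [decide_eq_decide]
      exact ⟨fun h => h.1, fun h => ⟨h, (hJ x hx).2⟩⟩
    rw [hg0]
    refine le_trans (Nat.add_le_add h1 h2') (le_of_eq ?_)
    ring

lemma foldr_min_le {a : ℕ} : ∀ (l : List ℕ) (b : ℕ), a ∈ l → l.foldr min b ≤ a := by
  intro l
  induction l with
  | nil => simp
  | cons x l ih =>
    intro b h
    rcases List.mem_cons.mp h with rfl | h
    · exact min_le_left _ _
    · exact le_trans (min_le_right _ _) (ih b h)

lemma foldr_min_cases : ∀ (l : List ℕ) (b : ℕ), l.foldr min b = b ∨ l.foldr min b ∈ l := by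
  intro l
  induction l with
  | nil => intro b; left; rfl
  | cons x l ih =>
    intro b
    rcases le_total x (l.foldr min b) with h | h
    · right
      simp only [List.foldr_cons, min_eq_left h]
      exact List.mem_cons_self
    · have : (x :: l).foldr min b = l.foldr min b := by
        simp only [List.foldr_cons, min_eq_right h]
      rw [this]
      rcases ih b with h' | h'
      · left; exact h'
      · right; exact List.mem_cons_of_mem _ h'

lemma sum_Icc_two (g : ℕ → ℕ) : ∀ k : ℕ, 2 ≤ k →
    ∑ j ∈ Finset.Icc 2 k, g j = ∑ i ∈ Finset.range (k-1), g (2+i) := by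
  intro k
  induction k with
  | zero => omega
  | succ n ihn =>
    intro hk
    rcases Nat.lt_or_ge n 2 with h | h
    · have hn : n = 1 := by omega
      subst hn
      simp
    · rw [Finset.sum_Icc_succ_top (by omega) g, ihn h]
      have h1 : n + 1 - 1 = (n-1) + 1 := by omega
      rw [h1, Finset.sum_range_succ]
      have h2 : 2 + (n-1) = n + 1 := by omega
      rw [h2]

lemma key_bound (k : ℕ) (hk : 2 ≤ k) (I : List ℝ) (hI : validInput I)
    (J : List ℝ) (hJI : J.Perm I) :
    worstOf dnfCount I ≤ dhCount k J + (k-1) := by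
  have hJv : ∀ x ∈ J, 0 < x ∧ x < 1 := fun x hx => hI x (hJI.mem_iff.mp hx)
  have hτ : (tauL (k-1) 2 J).Perm I := (tauL_perm _ _ _).trans hJI
  have hmem : dnfCount (tauL (k-1) 2 J) ∈ I.permutations.map dnfCount :=
    List.mem_map.mpr ⟨_, List.mem_permutations.mpr hτ, rfl⟩
  have hW : worstOf dnfCount I ≤ dnfCount (tauL (k-1) 2 J) := foldr_min_le _ _ hmem
  have hJ0 : ∀ x ∈ J, 0 ≤ x ∧ x < 1/(((2:ℕ):ℝ)-1) := by
    intro x hx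
    have h := hJv x hx
    have h2 : (((2:ℕ):ℝ)-1) = 1 := by norm_num
    rw [h2]
    exact ⟨h.1.le, by simpa using h.2⟩
  have hb := tau_bound (k-1) 2 J 0 le_rfl hJ0 le_rfl one_pos
  have hidx : 2 + (k-1) - 1 = k := by omega
  rw [hidx] at hb
  rw [if_pos (rfl : (0:ℝ) = 0)] at hb
  have hdh : dhCount k J =
      (∑ i ∈ Finset.range (k-1),
        (J.countP fun x => decide ((1:ℝ)/((2+i:ℕ):ℝ) ≤ x ∧ x < 1/(((2+i:ℕ):ℝ) - 1))) / (2+i))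
      + dnfC 0 (J.filter fun x => decide (x < 1/((k:ℕ):ℝ))) := by
    rw [dhCount]
    congr 1
    exact sum_Icc_two _ k hk
  rw [hdh]
  have hτc : dnfCount (tauL (k-1) 2 J) = dnfC 0 (tauL (k-1) 2 J) := rfl
  omega

/-- For every `k ≥ 2` and every input sequence `I`,
`DH_{k,W}(I) ≥ DNF_W(I) - (k-1)`. -/
theorem dh_worst_ge_dnf_worst (k : ℕ) (hk : 2 ≤ k) (I : List ℝ) (hI : validInput I) :
    (worstOf dnfCount I : ℝ) - ((k:ℝ) - 1) ≤ (worstOf (dhCount k) I : ℝ) := by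
  have key : ∀ J : List ℝ, J.Perm I → worstOf dnfCount I ≤ dhCount k J + (k-1) :=
    fun J hJ => key_bound k hk I hI J hJ
  have hNat : worstOf dnfCount I ≤ worstOf (dhCount k) I + (k-1) := by
    rcases foldr_min_cases (I.permutations.map (dhCount k)) (dhCount k I) with h | h
    · have : worstOf (dhCount k) I = dhCount k I := h
      rw [this]
      exact key I (List.Perm.refl I)
    · obtain ⟨J, hJmem, hJeq⟩ := List.mem_map.mp h
      have : worstOf (dhCount k) I = dhCount k J := hJeq.symm
      rw [this]
      exact key J (List.mem_permutations.mp hJmem)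
  have hcast : ((worstOf dnfCount I : ℕ):ℝ) ≤ ((worstOf (dhCount k) I + (k-1) : ℕ):ℝ) :=
    Nat.cast_le.mpr hNat
  push_cast [Nat.cast_sub (by omega : 1 ≤ k)] at hcast
  linarith
end

section
/- For every integer k ≥ 2 and every n ≥ 1, the input sequence I_n consisting of 2n consecutive copies of the block ⟨1/2, 1/(2n), …, 1/(2n), 1/2⟩ (where each block contains n − 1 items of size 1/(2n)) satisfies DH_k,W(I_n) = 3n − 1 and DNF_W(I_n) ≤ 2n, so that DH_k,W(I_n) ≥ (3/2)·DNF_W(I_n) − 1; consequently, for every c < 3/2 and every constant b there exists an input sequence I with DH_k,W(I) > c·DNF_W(I) + b. -/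
open Filter MeasureTheory

/-- The sequence `I_n`: `2n` consecutive copies of the block
`⟨1/2, 1/(2n), …, 1/(2n), 1/2⟩` with `n-1` items of size `1/(2n)` per block. -/
noncomputable def Iseq (n : ℕ) : List ℝ :=
  (List.replicate (2*n)
    (((1:ℝ)/2) :: (List.replicate (n-1) ((1:ℝ)/(2*(n:ℝ))) ++ [(1:ℝ)/2]))).flatten

section DHAux

/-! ### Auxiliary lemmas -/

lemma aux_foldr_min_le (b : ℕ) (l : List ℕ) : l.foldr min b ≤ b := by
  induction l with
  | nil => simp
  | cons a t ih => exact le_trans (min_le_right _ _) ih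

lemma aux_foldr_min_const (b : ℕ) (l : List ℕ) (h : ∀ x ∈ l, x = b) : l.foldr min b = b := by
  induction l with
  | nil => rfl
  | cons a t ih =>
      simp only [List.foldr_cons]
      rw [ih fun x hx => h x (List.mem_cons_of_mem _ hx), h a (List.mem_cons_self), min_self]

lemma aux_worstOf_le (A : List ℝ → ℕ) (I : List ℝ) : worstOf A I ≤ A I :=
  aux_foldr_min_le _ _

lemma aux_worstOf_eq (A : List ℝ → ℕ) (I : List ℝ)
    (h : ∀ J, J.Perm I → A J = A I) : worstOf A I = A I := by
  apply aux_foldr_min_const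
  intro x hx
  rcases List.mem_map.1 hx with ⟨J, hJ, rfl⟩
  exact h J (List.perm_of_mem_permutations hJ)

lemma aux_dnf_fill (a : ℝ) (ha : 0 < a) :
    ∀ i : ℕ, 1 ≤ i → ∀ c : ℕ,
      List.foldl dnfStep (1 - (i:ℝ) * a, c) (List.replicate i a) = (0, c + 1) := by
  intro i hi
  induction i, hi using Nat.le_induction with
  | base =>
      intro c
      simp [dnfStep]
  | succ i hi ih =>
      intro c
      rw [List.replicate_succ, List.foldl_cons]
      have hia : 0 < (i:ℝ) * a := by
        have : (1:ℝ) ≤ (i:ℝ) := by exact_mod_cast hi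
        positivity
      have h1 : (1 - ((i+1:ℕ):ℝ) * a) + a = 1 - (i:ℝ) * a := by push_cast; ring
      have h2 : ¬ (1 ≤ (1:ℝ) - (i:ℝ) * a) := by linarith
      simp only [dnfStep, h1, h2, if_false]
      exact ih c

lemma aux_dnf_nofill (a : ℝ) (ha : 0 ≤ a) :
    ∀ (i : ℕ) (s : ℝ) (c : ℕ), 0 ≤ s → s + (i:ℝ) * a < 1 →
      List.foldl dnfStep (s, c) (List.replicate i a) = (s + (i:ℝ) * a, c) := by
  intro i
  induction i with
  | zero => intro s c _ _; simp
  | succ i ih =>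
      intro s c hs hlt
      rw [List.replicate_succ, List.foldl_cons]
      have hia : 0 ≤ (i:ℝ) * a := by positivity
      have h2 : ¬ (1 ≤ s + a) := by push_cast at hlt; nlinarith
      have h3 : (s + a) + (i:ℝ) * a < 1 := by push_cast at hlt; linarith
      simp only [dnfStep, h2, if_false]
      rw [ih (s + a) c (by linarith) h3]
      push_cast
      ring_nf

lemma aux_dnf_blocks (q : ℕ) (a : ℝ) (ha : 0 < a) (hqa : (q:ℝ) * a = 1) :
    ∀ (m c : ℕ), List.foldl dnfStep (0, c) (List.replicate (m * q) a) = (0, c + m) := by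
  have hq : 1 ≤ q := by
    by_contra h
    push_neg at h
    interval_cases q
    simp at hqa
  intro m
  induction m with
  | zero => intro c; simp
  | succ m ih =>
      intro c
      have hrw : (m + 1) * q = q + m * q := by ring
      rw [hrw, List.replicate_add, List.foldl_append]
      have h0 : (0:ℝ) = 1 - (q:ℝ) * a := by rw [hqa]; ring
      have hfill := aux_dnf_fill a ha q hq c
      rw [← h0] at hfill
      rw [hfill, ih (c+1)]
      have hcc : c + 1 + m = c + (m+1) := by omega
      rw [hcc]

/-- If every small item of `I` equals `a`, then `dhCount k` takes the same value
on every permutation of `I`. -/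
lemma aux_dhCount_perm (k : ℕ) (I J : List ℝ) (a : ℝ)
    (ha : ∀ x ∈ I, x < 1/(k:ℝ) → x = a) (hIJ : J.Perm I) :
    dhCount k J = dhCount k I := by
  have hfilt : ∀ L : List ℝ, (∀ x ∈ L, x < 1/(k:ℝ) → x = a) →
      L.filter (fun x => decide (x < 1/(k:ℝ))) =
      List.replicate (L.countP fun x => decide (x < 1/(k:ℝ))) a := by
    intro L hL
    rw [List.eq_replicate_iff]
    refine ⟨List.countP_eq_length_filter.symm, ?_⟩
    intro b hb
    rcases List.mem_filter.1 hb with ⟨hbL, hbp⟩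
    exact hL b hbL (by simpa using hbp)
  unfold dhCount
  congr 1
  · apply Finset.sum_congr rfl
    intro j _
    rw [hIJ.countP_eq]
  · rw [hfilt J (fun x hx => ha x (hIJ.mem_iff.1 hx)), hfilt I ha, hIJ.countP_eq]

lemma aux_mem_Iseq {n : ℕ} {x : ℝ} (hx : x ∈ Iseq n) :
    x = 1/2 ∨ x = 1/(2*(n:ℝ)) := by
  unfold Iseq at hx
  rcases List.mem_flatten.1 hx with ⟨L, hL, hxL⟩
  rw [List.eq_of_mem_replicate hL] at hxL
  rcases List.mem_cons.1 hxL with h | h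
  · left; exact h
  rcases List.mem_append.1 h with h | h
  · right; exact List.eq_of_mem_replicate h
  · left; simpa using h

lemma aux_countP_Iseq (n : ℕ) (p : ℝ → Bool) :
    (Iseq n).countP p
      = 2*n * ((if p (1/2) then 2 else 0) + (if p (1/(2*(n:ℝ))) then n-1 else 0)) := by
  unfold Iseq
  rw [List.countP_flatten, List.map_replicate, List.sum_replicate, smul_eq_mul]
  congr 1
  rw [List.countP_cons, List.countP_append, List.countP_replicate]
  have : List.countP p [(1:ℝ)/2] = if p ((1:ℝ)/2) then 1 else 0 := by
    rw [List.countP_cons, List.countP_nil]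
    cases hp : p ((1:ℝ)/2) <;> simp [hp]
  rw [this]
  cases hp : p ((1:ℝ)/2) <;> cases hq : p (1/(2*(n:ℝ))) <;> simp [hp, hq] <;> omega

end DHAux
section DHMain

lemma aux_filter_eq_replicate (p : ℝ → Bool) (L : List ℝ) (a : ℝ)
    (h : ∀ x ∈ L, p x = true → x = a) :
    L.filter p = List.replicate (L.countP p) a := by
  rw [List.eq_replicate_iff]
  refine ⟨List.countP_eq_length_filter.symm, ?_⟩
  intro b hb
  rcases List.mem_filter.1 hb with ⟨hbL, hbp⟩
  exact h b hbL hbp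

lemma aux_dhCount_Iseq (k n : ℕ) (hk : 2 ≤ k) (hn : 1 ≤ n) :
    dhCount k (Iseq n) = 3*n - 1 := by
  have h2n0 : (0:ℝ) < 2*(n:ℝ) := by
    have : (1:ℝ) ≤ (n:ℝ) := by exact_mod_cast hn
    linarith
  have hk0 : (0:ℝ) < (k:ℝ) := by
    have : (2:ℝ) ≤ (k:ℝ) := by exact_mod_cast hk
    linarith
  -- half items are never small
  have hph : ¬ ((1:ℝ)/2 < 1/(k:ℝ)) := by
    rw [not_lt, div_le_div_iff₀ hk0 (by norm_num : (0:ℝ) < 2)]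
    have : (2:ℝ) ≤ (k:ℝ) := by exact_mod_cast hk
    linarith
  -- small items are small iff k < 2n
  have hps : ((1:ℝ)/(2*(n:ℝ)) < 1/(k:ℝ)) ↔ k < 2*n := by
    rw [div_lt_div_iff₀ h2n0 hk0]
    constructor
    · intro h
      have : (k:ℝ) < 2*(n:ℝ) := by linarith
      exact_mod_cast this
    · intro h
      have : (k:ℝ) < 2*(n:ℝ) := by exact_mod_cast h
      linarith
  -- bucket membership of the half items
  have hhalf : ∀ j : ℕ, 2 ≤ j →
      (((1:ℝ)/(j:ℝ) ≤ 1/2 ∧ 1/2 < 1/((j:ℝ)-1)) ↔ j = 2) := by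
    intro j hj
    have hjr : (2:ℝ) ≤ (j:ℝ) := by exact_mod_cast hj
    constructor
    · rintro ⟨_, h2⟩
      by_contra hne
      have hj3 : 3 ≤ j := by omega
      have hj3r : (3:ℝ) ≤ (j:ℝ) := by exact_mod_cast hj3
      rw [div_lt_div_iff₀ (by norm_num : (0:ℝ) < 2) (by linarith : (0:ℝ) < (j:ℝ)-1)] at h2
      linarith
    · rintro rfl
      norm_num
  -- bucket membership of the small items
  have hsmall : ∀ j : ℕ, 2 ≤ j →
      (((1:ℝ)/(j:ℝ) ≤ 1/(2*(n:ℝ)) ∧ 1/(2*(n:ℝ)) < 1/((j:ℝ)-1)) ↔ j = 2*n) := by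
    intro j hj
    have hj0 : (0:ℝ) < (j:ℝ) := by
      have : (2:ℝ) ≤ (j:ℝ) := by exact_mod_cast hj
      linarith
    have hj1 : (0:ℝ) < (j:ℝ) - 1 := by
      have : (2:ℝ) ≤ (j:ℝ) := by exact_mod_cast hj
      linarith
    constructor
    · rintro ⟨h1, h2⟩
      rw [div_le_div_iff₀ hj0 h2n0] at h1
      rw [div_lt_div_iff₀ h2n0 hj1] at h2
      have hle : 2*n ≤ j := by
        have : 2*(n:ℝ) ≤ (j:ℝ) := by linarith
        exact_mod_cast this
      have hlt : (j:ℝ) < 2*(n:ℝ) + 1 := by linarith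
      have hge : j ≤ 2*n := by
        have hc : (j:ℝ) < ((2*n + 1 : ℕ):ℝ) := by push_cast; linarith
        have := Nat.cast_lt (α := ℝ) |>.mp hc
        omega
      omega
    · rintro rfl
      have h2nr : ((2*n : ℕ):ℝ) = 2*(n:ℝ) := by push_cast; ring
      rw [h2nr]
      have hnr : (1:ℝ) ≤ (n:ℝ) := by exact_mod_cast hn
      refine ⟨le_refl _, ?_⟩
      rw [div_lt_div_iff₀ h2n0 (by linarith : (0:ℝ) < 2*(n:ℝ)-1)]
      linarith
  -- pointwise evaluation of the bucket terms
  have hpt : ∀ j ∈ Finset.Icc 2 k,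
      ((Iseq n).countP fun x => decide ((1:ℝ)/(j:ℝ) ≤ x ∧ x < 1/((j:ℝ)-1))) / j
        = (if j = 2 then 2*n else 0) + (if j = 2*n then n-1 else 0) := by
    intro j hj
    obtain ⟨hj2, hjk⟩ := Finset.mem_Icc.1 hj
    rw [aux_countP_Iseq]
    simp only [decide_eq_true_eq, hhalf j hj2, hsmall j hj2]
    by_cases h2 : j = 2
    · subst h2
      by_cases h2n : 2 = 2*n
      · have hn1 : n = 1 := by omega
        subst hn1
        norm_num
      · simp only [if_neg h2n, eq_self_iff_true, if_true, add_zero]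
        omega
    · by_cases h2n : j = 2*n
      · subst h2n
        simp only [if_neg h2, eq_self_iff_true, if_true, zero_add]
        rw [Nat.mul_div_cancel_left _ (by omega : 0 < 2*n)]
      · simp only [if_neg h2, if_neg h2n, add_zero]
        simp
  -- the bucket sum
  have hsum : (∑ j ∈ Finset.Icc 2 k,
      ((Iseq n).countP fun x => decide ((1:ℝ)/(j:ℝ) ≤ x ∧ x < 1/((j:ℝ)-1))) / j)
        = 2*n + (if 2*n ≤ k then n-1 else 0) := by
    rw [Finset.sum_congr rfl hpt, Finset.sum_add_distrib,
      Finset.sum_ite_eq' (Finset.Icc 2 k) 2 (fun _ => 2*n),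
      Finset.sum_ite_eq' (Finset.Icc 2 k) (2*n) (fun _ => n-1)]
    rw [if_pos (Finset.mem_Icc.2 ⟨le_refl 2, hk⟩)]
    congr 1
    by_cases h : 2*n ≤ k
    · rw [if_pos (Finset.mem_Icc.2 ⟨by omega, h⟩), if_pos h]
    · rw [if_neg (fun hc => h (Finset.mem_Icc.1 hc).2), if_neg h]
  -- the small-item filter
  have hfil : (Iseq n).filter (fun x => decide (x < 1/(k:ℝ)))
      = List.replicate ((Iseq n).countP fun x => decide (x < 1/(k:ℝ))) (1/(2*(n:ℝ))) := by
    apply aux_filter_eq_replicate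
    intro x hx hp
    rw [decide_eq_true_eq] at hp
    rcases aux_mem_Iseq hx with h | h
    · exact absurd (h ▸ hp) hph
    · exact h
  have hcnt : ((Iseq n).countP fun x => decide (x < 1/(k:ℝ)))
      = 2*n * (if k < 2*n then n-1 else 0) := by
    rw [aux_countP_Iseq]
    simp only [decide_eq_true_eq, hps]
    rw [if_neg hph, zero_add]
  have hdnf : dnfCount ((Iseq n).filter (fun x => decide (x < 1/(k:ℝ))))
      = if k < 2*n then n-1 else 0 := by
    rw [hfil, hcnt]
    by_cases h : k < 2*n
    · rw [if_pos h]
      unfold dnfCount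
      have hmul : 2*n*(n-1) = (n-1)*(2*n) := by ring
      rw [hmul]
      have hq : ((2*n : ℕ):ℝ) * (1/(2*(n:ℝ))) = 1 := by
        push_cast
        field_simp
      have := aux_dnf_blocks (2*n) (1/(2*(n:ℝ))) (by positivity) hq (n-1) 0
      rw [this]
      simp
    · rw [if_neg h]
      simp [dnfCount]
  unfold dhCount
  rw [hsum, hdnf]
  by_cases h : 2*n ≤ k
  · rw [if_pos h, if_neg (by omega : ¬ k < 2*n)]
    omega
  · rw [if_neg h, if_pos (by omega : k < 2*n)]
    omega

end DHMain
lemma aux_dnf_block (n : ℕ) (hn : 1 ≤ n) (c : ℕ) :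
    List.foldl dnfStep (0, c)
      (((1:ℝ)/2) :: (List.replicate (n-1) ((1:ℝ)/(2*(n:ℝ))) ++ [(1:ℝ)/2])) = (0, c+1) := by
  have hnr : (1:ℝ) ≤ (n:ℝ) := by exact_mod_cast hn
  have h2n0 : (0:ℝ) < 2*(n:ℝ) := by linarith
  have hcast : ((n-1 : ℕ):ℝ) = (n:ℝ) - 1 := by
    rw [Nat.cast_sub hn]; norm_num
  have hkey : ((n:ℝ)-1) * (1/(2*(n:ℝ))) < 1/2 := by
    rw [mul_one_div, div_lt_div_iff₀ h2n0 (by norm_num : (0:ℝ) < 2)]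
    linarith
  have hnn : (0:ℝ) ≤ ((n:ℝ)-1) * (1/(2*(n:ℝ))) := by
    have h1 : (0:ℝ) ≤ (n:ℝ) - 1 := by linarith
    positivity
  rw [List.foldl_cons]
  have hstep1 : dnfStep (0, c) (1/2) = (1/2, c) := by
    simp only [dnfStep]
    norm_num
  rw [hstep1, List.foldl_append]
  have hnf := aux_dnf_nofill (1/(2*(n:ℝ))) (by positivity) (n-1) (1/2) c (by norm_num)
    (by rw [hcast]; linarith)
  rw [hnf, hcast]
  simp only [List.foldl_cons, List.foldl_nil, dnfStep]
  rw [if_pos (by linarith)]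

lemma aux_foldl_flatten (B : List ℝ)
    (hB : ∀ c, List.foldl dnfStep (0, c) B = (0, c+1)) :
    ∀ m c, List.foldl dnfStep (0, c) ((List.replicate m B).flatten) = (0, c+m) := by
  intro m
  induction m with
  | zero => intro c; simp
  | succ m ih =>
      intro c
      rw [List.replicate_succ, List.flatten_cons, List.foldl_append, hB c, ih (c+1)]
      have : c + 1 + m = c + (m+1) := by omega
      rw [this]

lemma aux_dnfCount_Iseq (n : ℕ) (hn : 1 ≤ n) : dnfCount (Iseq n) = 2*n := by
  unfold dnfCount Iseq
  rw [aux_foldl_flatten _ (aux_dnf_block n hn) (2*n) 0]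
  simp
lemma aux_half_not_small (k : ℕ) (hk : 2 ≤ k) : ¬ ((1:ℝ)/2 < 1/(k:ℝ)) := by
  have hk0 : (0:ℝ) < (k:ℝ) := by
    have : (2:ℝ) ≤ (k:ℝ) := by exact_mod_cast hk
    linarith
  rw [not_lt, div_le_div_iff₀ hk0 (by norm_num : (0:ℝ) < 2)]
  have : (2:ℝ) ≤ (k:ℝ) := by exact_mod_cast hk
  linarith

lemma aux_worstOf_dh (k n : ℕ) (hk : 2 ≤ k) (hn : 1 ≤ n) :
    worstOf (dhCount k) (Iseq n) = 3*n - 1 := by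
  rw [aux_worstOf_eq]
  · exact aux_dhCount_Iseq k n hk hn
  · intro J hJ
    refine aux_dhCount_perm k (Iseq n) J (1/(2*(n:ℝ))) ?_ hJ
    intro x hx hxs
    rcases aux_mem_Iseq hx with h | h
    · exact absurd (h ▸ hxs) (aux_half_not_small k hk)
    · exact h

lemma aux_worstOf_dnf (n : ℕ) (hn : 1 ≤ n) : worstOf dnfCount (Iseq n) ≤ 2*n :=
  (aux_worstOf_le _ _).trans (le_of_eq (aux_dnfCount_Iseq n hn))

lemma aux_valid_Iseq (n : ℕ) (hn : 1 ≤ n) : validInput (Iseq n) := by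
  intro x hx
  have hnr : (1:ℝ) ≤ (n:ℝ) := by exact_mod_cast hn
  rcases aux_mem_Iseq hx with h | h <;> rw [h]
  · norm_num
  · constructor
    · positivity
    · rw [div_lt_one (by linarith : (0:ℝ) < 2*(n:ℝ))]
      linarith

/-- For every `k ≥ 2` and `n ≥ 1`, the sequence `I_n` satisfies
`DH_{k,W}(I_n) = 3n - 1` and `DNF_W(I_n) ≤ 2n`, hence
`DH_{k,W}(I_n) ≥ (3/2)·DNF_W(I_n) - 1`; consequently, for every `c < 3/2` and
every constant `b` there is an input `I` with `DH_{k,W}(I) > c·DNF_W(I) + b`. -/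
theorem dh_worst_lower_family (k : ℕ) (hk : 2 ≤ k) :
    (∀ n : ℕ, 1 ≤ n →
      worstOf (dhCount k) (Iseq n) = 3*n - 1 ∧
      worstOf dnfCount (Iseq n) ≤ 2*n ∧
      (3/2 : ℝ) * (worstOf dnfCount (Iseq n) : ℝ) - 1 ≤ (worstOf (dhCount k) (Iseq n) : ℝ)) ∧
    (∀ c : ℝ, c < 3/2 → ∀ b : ℝ, ∃ I : List ℝ, validInput I ∧
      c * (worstOf dnfCount I : ℝ) + b < (worstOf (dhCount k) I : ℝ)) := by

  have hcast : ∀ n : ℕ, 1 ≤ n → ((3*n - 1 : ℕ):ℝ) = 3*(n:ℝ) - 1 := by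
    intro n hn
    have h1 : 1 ≤ 3*n := by omega
    push_cast [Nat.cast_sub h1]
    ring
  constructor
  · intro n hn
    refine ⟨aux_worstOf_dh k n hk hn, aux_worstOf_dnf n hn, ?_⟩
    have hx : (worstOf dnfCount (Iseq n) : ℝ) ≤ 2*(n:ℝ) := by
      exact_mod_cast aux_worstOf_dnf n hn
    rw [aux_worstOf_dh k n hk hn, hcast n hn]
    linarith
  · intro c hc b
    set M := max c 0 with hM
    have hM0 : 0 ≤ M := le_max_right _ _
    have hMc : c ≤ M := le_max_left _ _
    have hM32 : M < 3/2 := max_lt hc (by norm_num)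
    have h3 : (0:ℝ) < 3 - 2*M := by linarith
    obtain ⟨n₀, hn₀⟩ := exists_nat_gt ((b+1)/(3 - 2*M))
    set n := n₀ + 1 with hn
    have hn1 : 1 ≤ n := by omega
    refine ⟨Iseq n, aux_valid_Iseq n hn1, ?_⟩
    have hx : (worstOf dnfCount (Iseq n) : ℝ) ≤ 2*(n:ℝ) := by
      exact_mod_cast aux_worstOf_dnf n hn1
    have hx0 : (0:ℝ) ≤ (worstOf dnfCount (Iseq n) : ℝ) := Nat.cast_nonneg _
    have hnn : (b+1)/(3 - 2*M) < (n:ℝ) := by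
      have : (n₀:ℝ) < (n:ℝ) := by
        rw [hn]; push_cast; linarith
      linarith
    have hbn : b + 1 < (3 - 2*M) * (n:ℝ) := by
      rw [div_lt_iff₀ h3] at hnn
      linarith
    have hdh : (worstOf (dhCount k) (Iseq n) : ℝ) = 3*(n:ℝ) - 1 := by
      rw [aux_worstOf_dh k n hk hn1, hcast n hn1]
    rw [hdh]
    have h1 : c * (worstOf dnfCount (Iseq n) : ℝ) ≤ M * (worstOf dnfCount (Iseq n) : ℝ) :=
      mul_le_mul_of_nonneg_right hMc hx0
    have h2 : M * (worstOf dnfCount (Iseq n) : ℝ) ≤ M * (2*(n:ℝ)) :=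
      mul_le_mul_of_nonneg_left hx hM0
    nlinarith
end
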